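/- arXiv:1308.0733 — 3 statements merged into one kernel-verified Lean document; each statement's English description precedes it below -/
import Mathlib

section
/- The number of non-crossing partitions of {1,…,n} equals the n-th Catalan number, and the Kreweras complement K: NC(n) → NC(n) is an order-reversing bijection of the lattice of non-crossing partitions. -/
open Finset

/-- A family of blocks in `Fin m` is non-crossing: there are no `a < b < c < d` with
`a, c` in one block and `b, d` in a different block of the family. -/
def IsNCFamily {m : ℕ} (P : Finset (Finset (Fin m))) : Prop :=
  ¬ ∃ (a b c d : Fin m) (B₁ B₂ : Finset (Fin m)),
      a < b ∧ b < c ∧ c < d ∧ B₁ ∈ P ∧ B₂ ∈ P ∧ B₁ ≠ B₂ ∧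
      a ∈ B₁ ∧ c ∈ B₁ ∧ b ∈ B₂ ∧ d ∈ B₂

/-- A partition of `{1,…,n}` is non-crossing. -/
def IsNoncrossing {n : ℕ} (π : Finpartition (univ : Finset (Fin n))) : Prop :=
  IsNCFamily π.parts

/-- The lattice `NC(n)` of non-crossing partitions of `{1,…,n}`. -/
abbrev NCPart (n : ℕ) : Type :=
  {π : Finpartition (univ : Finset (Fin n)) // IsNoncrossing π}

/-- `i ↦ 2i`: the unprimed (even) positions in the interleaved set `1, 1̄, …, n, n̄`. -/
def evenEmb {n : ℕ} (i : Fin n) : Fin (2 * n) := ⟨2 * i, by omega⟩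

/-- `i ↦ 2i+1`: the primed (odd) positions in the interleaved set. -/
def oddEmb {n : ℕ} (i : Fin n) : Fin (2 * n) := ⟨2 * i + 1, by omega⟩

/-- `σ` (on the primed copies) is Kreweras-compatible with `π`: the interleaved union
`π ∪ σ̄` is a non-crossing family on `1, 1̄, 2, 2̄, …, n, n̄`. -/
def KrewCompat {n : ℕ} (π σ : Finpartition (univ : Finset (Fin n))) : Prop :=
  IsNCFamily ((π.parts.image fun B => B.image evenEmb) ∪
    (σ.parts.image fun B => B.image oddEmb))

open Classical in
/-- The Kreweras complement `K(π)`: the greatest non-crossing partition whose interleaved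
union with `π` is non-crossing. -/
noncomputable def kreweras {n : ℕ} (π : NCPart n) : NCPart n :=
  if h : ∃ σ : NCPart n, IsGreatest {σ : NCPart n | KrewCompat π.1 σ.1} σ then h.choose
  else π

open Finset

namespace NCAux

variable {m : ℕ}

/-- Same-block relation of a finpartition of `univ : Finset (Fin m)`. -/
def SRel (π : Finpartition (univ : Finset (Fin m))) (x y : Fin m) : Prop :=
  ∃ B ∈ π.parts, x ∈ B ∧ y ∈ B

lemma srel_refl (π : Finpartition (univ : Finset (Fin m))) (x : Fin m) : SRel π x x := by
  obtain ⟨B, hB, hx⟩ := π.exists_mem (mem_univ x)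
  exact ⟨B, hB, hx, hx⟩

lemma srel_symm {π : Finpartition (univ : Finset (Fin m))} {x y : Fin m}
    (h : SRel π x y) : SRel π y x := by
  obtain ⟨B, hB, hx, hy⟩ := h
  exact ⟨B, hB, hy, hx⟩

lemma srel_trans {π : Finpartition (univ : Finset (Fin m))} {x y z : Fin m}
    (h : SRel π x y) (h' : SRel π y z) : SRel π x z := by
  obtain ⟨B, hB, hx, hy⟩ := h
  obtain ⟨C, hC, hy', hz⟩ := h'
  exact ⟨B, hB, hx, π.eq_of_mem_parts hC hB hy' hy ▸ hz⟩

lemma srel_iff_mem_part {π : Finpartition (univ : Finset (Fin m))} {x y : Fin m} :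
    SRel π x y ↔ y ∈ π.part x := by
  constructor
  · rintro ⟨B, hB, hx, hy⟩
    rwa [π.part_eq_of_mem hB hx]
  · intro h
    exact ⟨π.part x, π.part_mem.2 (mem_univ x), π.mem_part (mem_univ x), h⟩

/-- Partitions with the same same-block relation are equal. -/
lemma eq_of_srel_iff {π σ : Finpartition (univ : Finset (Fin m))}
    (h : ∀ x y, SRel π x y ↔ SRel σ x y) : π = σ := by
  have hpart : ∀ x : Fin m, π.part x = σ.part x := by
    intro x
    ext y
    rw [← srel_iff_mem_part, ← srel_iff_mem_part, h]
  ext B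
  constructor
  · intro hB
    obtain ⟨x, hx⟩ := π.nonempty_of_mem_parts hB
    have : B = π.part x := (π.part_eq_of_mem hB hx).symm
    rw [this, hpart]
    exact σ.part_mem.2 (mem_univ x)
  · intro hB
    obtain ⟨x, hx⟩ := σ.nonempty_of_mem_parts hB
    have : B = σ.part x := (σ.part_eq_of_mem hB hx).symm
    rw [this, ← hpart]
    exact π.part_mem.2 (mem_univ x)

lemma le_iff_srel {π σ : Finpartition (univ : Finset (Fin m))} :
    π ≤ σ ↔ ∀ x y, SRel π x y → SRel σ x y := by
  constructor
  · rintro h x y ⟨B, hB, hx, hy⟩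
    obtain ⟨C, hC, hBC⟩ := h hB
    exact ⟨C, hC, hBC hx, hBC hy⟩
  · intro h B hB
    obtain ⟨x, hx⟩ := π.nonempty_of_mem_parts hB
    refine ⟨σ.part x, σ.part_mem.2 (mem_univ x), fun y hy => ?_⟩
    exact srel_iff_mem_part.1 (h x y ⟨B, hB, hx, hy⟩)

/-- Noncrossing property of a relation. -/
def NCR (r : Fin m → Fin m → Prop) : Prop :=
  ∀ a b c d : Fin m, a < b → b < c → c < d → r a c → r b d → r a b

lemma isNoncrossing_iff_ncr {π : Finpartition (univ : Finset (Fin m))} :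
    IsNoncrossing π ↔ NCR (SRel π) := by
  constructor
  · intro h a b c d hab hbc hcd ⟨B₁, hB₁, ha, hc⟩ ⟨B₂, hB₂, hb, hd⟩
    by_cases hne : B₁ = B₂
    · exact ⟨B₁, hB₁, ha, hne ▸ hb⟩
    · exact absurd ⟨a, b, c, d, B₁, B₂, hab, hbc, hcd, hB₁, hB₂, hne, ha, hc, hb, hd⟩ h
  · rintro h ⟨a, b, c, d, B₁, B₂, hab, hbc, hcd, hB₁, hB₂, hne, ha, hc, hb, hd⟩
    obtain ⟨B, hB, ha', hb'⟩ := h a b c d hab hbc hcd ⟨B₁, hB₁, ha, hc⟩ ⟨B₂, hB₂, hb, hd⟩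
    exact hne ((π.eq_of_mem_parts hB₁ hB ha ha').trans (π.eq_of_mem_parts hB hB₂ hb' hb))

/-- A finset is saturated for a relation. -/
def Sat (r : Fin m → Fin m → Prop) (s : Finset (Fin m)) : Prop :=
  ∀ x y, r x y → (x ∈ s ↔ y ∈ s)

lemma sat_congr {r : Fin m → Fin m → Prop} {s t : Finset (Fin m)} (h : s = t)
    (hs : Sat r s) : Sat r t := h ▸ hs

lemma Sat.union {r : Fin m → Fin m → Prop} {s t : Finset (Fin m)}
    (hs : Sat r s) (ht : Sat r t) : Sat r (s ∪ t) := by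
  intro x y hxy
  simp only [mem_union, hs x y hxy, ht x y hxy]

lemma Sat.inter {r : Fin m → Fin m → Prop} {s t : Finset (Fin m)}
    (hs : Sat r s) (ht : Sat r t) : Sat r (s ∩ t) := by
  intro x y hxy
  simp only [mem_inter, hs x y hxy, ht x y hxy]

lemma Sat.sdiff {r : Fin m → Fin m → Prop} {s t : Finset (Fin m)}
    (hs : Sat r s) (ht : Sat r t) : Sat r (s \ t) := by
  intro x y hxy
  simp only [mem_sdiff, hs x y hxy, ht x y hxy]

lemma Sat.empty {r : Fin m → Fin m → Prop} : Sat r (∅ : Finset (Fin m)) := by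
  intro x y _; simp

lemma sat_of_mono {r : Fin m → Fin m → Prop} {s : Finset (Fin m)}
    (hsymm : ∀ x y, r x y → r y x)
    (h : ∀ x y, r x y → x ∈ s → y ∈ s) : Sat r s :=
  fun x y hxy => ⟨h x y hxy, h y x (hsymm x y hxy)⟩

/-- Build a finpartition of `univ : Finset (Fin m)` from an equivalence relation. -/
noncomputable def ofRel (r : Fin m → Fin m → Prop) (hr : Equivalence r) :
    Finpartition (univ : Finset (Fin m)) :=
  letI : DecidableRel r := Classical.decRel r
  Finpartition.ofSetoid ⟨r, hr⟩

lemma srel_ofRel {r : Fin m → Fin m → Prop} {hr : Equivalence r} {x y : Fin m} :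
    SRel (ofRel r hr) x y ↔ r x y := by
  classical
  rw [srel_iff_mem_part, ofRel]
  exact Finpartition.mem_part_ofSetoid_iff_rel

end NCAux

namespace NCAux

variable {m : ℕ}

lemma ioc_union {a b c : Fin m} (h1 : a ≤ b) (h2 : b ≤ c) :
    Ioc a c = Ioc a b ∪ Ioc b c := by
  ext t; simp only [mem_Ioc, mem_union, Fin.lt_def, Fin.le_def] at *; omega

lemma ioc_sdiff1 {a b c : Fin m} (h1 : a ≤ b) (h2 : b ≤ c) :
    Ioc b c = Ioc a c \ Ioc a b := by
  ext t; simp only [mem_Ioc, mem_sdiff, Fin.lt_def, Fin.le_def, not_and, not_le] at *; omega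

lemma ioc_sdiff2 {a b c : Fin m} (h1 : a ≤ b) (h2 : b ≤ c) :
    Ioc a b = Ioc a c \ Ioc b c := by
  ext t; simp only [mem_Ioc, mem_sdiff, Fin.lt_def, Fin.le_def, not_and, not_le] at *; omega

/-- The Kreweras relation of a partition. -/
def KRel (π : Finpartition (univ : Finset (Fin m))) (x y : Fin m) : Prop :=
  Sat (SRel π) (Ioc (min x y) (max x y))

lemma krel_of_le {π : Finpartition (univ : Finset (Fin m))} {x y : Fin m} (h : x ≤ y) :
    KRel π x y ↔ Sat (SRel π) (Ioc x y) := by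
  rw [KRel, min_eq_left h, max_eq_right h]

lemma krel_refl (π : Finpartition (univ : Finset (Fin m))) (x : Fin m) : KRel π x x := by
  rw [krel_of_le le_rfl, Ioc_self]
  exact Sat.empty

lemma krel_symm {π : Finpartition (univ : Finset (Fin m))} {x y : Fin m}
    (h : KRel π x y) : KRel π y x := by
  rwa [KRel, min_comm, max_comm]

lemma krel_trans {π : Finpartition (univ : Finset (Fin m))} {x y z : Fin m}
    (h : KRel π x y) (h' : KRel π y z) : KRel π x z := by
  have aux : ∀ x y z : Fin m, x ≤ z → KRel π x y → KRel π y z →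
      Sat (SRel π) (Ioc x z) := by
    intro x y z hxz h h'
    rcases le_total y x with hyx | hxy
    · have h2 := (krel_of_le hyx).1 (krel_symm h)
      have h3 := (krel_of_le (hyx.trans hxz)).1 h'
      exact sat_congr (ioc_sdiff1 hyx hxz).symm (h3.sdiff h2)
    · rcases le_total y z with hyz | hzy
      · rw [krel_of_le hxy] at h
        rw [krel_of_le hyz] at h'
        exact sat_congr (ioc_union hxy hyz).symm (h.union h')
      · rw [krel_of_le hxy] at h
        rw [KRel, min_comm, max_comm, min_eq_left hzy, max_eq_right hzy] at h'
        exact sat_congr (ioc_sdiff2 hxz hzy).symm (h.sdiff h')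
  rcases le_total x z with hxz | hzx
  · rw [krel_of_le hxz]
    exact aux x y z hxz h h'
  · rw [KRel, min_comm, max_comm, min_eq_left hzx, max_eq_right hzx]
    exact aux z y x hzx (krel_symm h') (krel_symm h)

lemma krel_equivalence (π : Finpartition (univ : Finset (Fin m))) : Equivalence (KRel π) :=
  ⟨krel_refl π, krel_symm, krel_trans⟩

lemma ncr_krel (π : Finpartition (univ : Finset (Fin m))) : NCR (KRel π) := by
  intro a b c d hab hbc hcd h1 h2
  rw [krel_of_le hab.le]
  rw [krel_of_le (hab.trans hbc).le] at h1
  rw [krel_of_le (hbc.trans hcd).le] at h2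
  have hbc' : Ioc b c = Ioc a c ∩ Ioc b d := by
    ext t
    simp only [mem_Ioc, mem_inter, Fin.lt_def, Fin.le_def] at *
    omega
  have : Sat (SRel π) (Ioc b c) := sat_congr hbc'.symm (h1.inter h2)
  exact sat_congr (ioc_sdiff2 hab.le hbc.le).symm (h1.sdiff this)

/-- The explicit Kreweras complement as a finpartition. -/
noncomputable def K0 (π : Finpartition (univ : Finset (Fin m))) :
    Finpartition (univ : Finset (Fin m)) :=
  ofRel (KRel π) (krel_equivalence π)

lemma srel_K0 {π : Finpartition (univ : Finset (Fin m))} {x y : Fin m} :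
    SRel (K0 π) x y ↔ KRel π x y := srel_ofRel

lemma isNoncrossing_K0 (π : Finpartition (univ : Finset (Fin m))) :
    IsNoncrossing (K0 π) := by
  rw [isNoncrossing_iff_ncr]
  intro a b c d hab hbc hcd h1 h2
  rw [srel_K0] at *
  exact ncr_krel π a b c d hab hbc hcd h1 h2

end NCAux

namespace NCAux

variable {n : ℕ}

lemma evenEmb_val (i : Fin n) : (evenEmb i).val = 2 * i.val := rfl
lemma oddEmb_val (i : Fin n) : (oddEmb i).val = 2 * i.val + 1 := rfl

lemma krewCompat_iff {π σ : Finpartition (univ : Finset (Fin n))}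
    (hπ : IsNoncrossing π) (hσ : IsNoncrossing σ) :
    KrewCompat π σ ↔ ∀ j l : Fin n, j < l → SRel σ j l → Sat (SRel π) (Ioc j l) := by
  constructor
  · rintro h j l hjl ⟨B, hB, hjB, hlB⟩
    refine sat_of_mono (fun x y hxy => srel_symm hxy) ?_
    rintro x y ⟨A, hA, hxA, hyA⟩ hxI
    by_contra hyI
    rw [mem_Ioc] at hxI
    rw [mem_Ioc] at hyI
    push_neg at hyI
    have hxI1 : j.val < x.val := hxI.1
    have hxI2 : x.val ≤ l.val := hxI.2
    have hy : y.val ≤ j.val ∨ l.val < y.val := by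
      rcases lt_or_ge j y with hc | hc
      · exact Or.inr (hyI hc)
      · exact Or.inl hc
    apply h
    rcases hy with hy | hy
    · exact ⟨evenEmb y, oddEmb j, evenEmb x, oddEmb l,
        A.image evenEmb, B.image oddEmb,
        by simp only [Fin.lt_def, evenEmb_val, oddEmb_val]; omega,
        by simp only [Fin.lt_def, evenEmb_val, oddEmb_val]; omega,
        by simp only [Fin.lt_def, evenEmb_val, oddEmb_val]; omega,
        mem_union_left _ (mem_image_of_mem _ hA),
        mem_union_right _ (mem_image_of_mem _ hB),
        by
          intro heq
          have : oddEmb j ∈ A.image evenEmb := heq ▸ mem_image_of_mem _ hjB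
          obtain ⟨t, _, ht⟩ := mem_image.1 this
          have := congrArg Fin.val ht
          simp only [evenEmb_val, oddEmb_val] at this
          omega,
        mem_image_of_mem _ hyA, mem_image_of_mem _ hxA,
        mem_image_of_mem _ hjB, mem_image_of_mem _ hlB⟩
    · exact ⟨oddEmb j, evenEmb x, oddEmb l, evenEmb y,
        B.image oddEmb, A.image evenEmb,
        by simp only [Fin.lt_def, evenEmb_val, oddEmb_val]; omega,
        by simp only [Fin.lt_def, evenEmb_val, oddEmb_val]; omega,
        by simp only [Fin.lt_def, evenEmb_val, oddEmb_val]; omega,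
        mem_union_right _ (mem_image_of_mem _ hB),
        mem_union_left _ (mem_image_of_mem _ hA),
        by
          intro heq
          have : evenEmb x ∈ B.image oddEmb := heq.symm ▸ mem_image_of_mem _ hxA
          obtain ⟨t, _, ht⟩ := mem_image.1 this
          have := congrArg Fin.val ht
          simp only [evenEmb_val, oddEmb_val] at this
          omega,
        mem_image_of_mem _ hjB, mem_image_of_mem _ hlB,
        mem_image_of_mem _ hxA, mem_image_of_mem _ hyA⟩
  · rintro h ⟨a, b, c, d, B₁, B₂, h1, h2, h3, hB1, hB2, hne, ha, hc, hb, hd⟩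
    rw [mem_union, mem_image, mem_image] at hB1 hB2
    rcases hB1 with ⟨A₁, hA₁, rfl⟩ | ⟨A₁, hA₁, rfl⟩ <;>
      rcases hB2 with ⟨A₂, hA₂, rfl⟩ | ⟨A₂, hA₂, rfl⟩
    · -- even / even : crossing in π
      obtain ⟨a', ha', rfl⟩ := mem_image.1 ha
      obtain ⟨c', hc', rfl⟩ := mem_image.1 hc
      obtain ⟨b', hb', rfl⟩ := mem_image.1 hb
      obtain ⟨d', hd', rfl⟩ := mem_image.1 hd
      simp only [Fin.lt_def, evenEmb_val] at h1 h2 h3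
      exact hπ ⟨a', b', c', d', A₁, A₂, by rw [Fin.lt_def]; omega,
        by rw [Fin.lt_def]; omega, by rw [Fin.lt_def]; omega, hA₁, hA₂,
        fun hAA => hne (by rw [hAA]), ha', hc', hb', hd'⟩
    · -- even / odd : mixed crossing, pattern i ≤ j < k ≤ l
      obtain ⟨i, hi, rfl⟩ := mem_image.1 ha
      obtain ⟨k, hk, rfl⟩ := mem_image.1 hc
      obtain ⟨j, hj, rfl⟩ := mem_image.1 hb
      obtain ⟨l, hl, rfl⟩ := mem_image.1 hd
      simp only [Fin.lt_def, evenEmb_val, oddEmb_val] at h1 h2 h3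
      have hjl : j < l := by rw [Fin.lt_def]; omega
      have hsat := h j l hjl ⟨A₂, hA₂, hj, hl⟩
      have hik : SRel π i k := ⟨A₁, hA₁, hi, hk⟩
      have hkI : k ∈ Ioc j l := by rw [mem_Ioc]; constructor <;> [rw [Fin.lt_def]; rw [Fin.le_def]] <;> omega
      have hiI : i ∈ Ioc j l := (hsat i k hik).2 hkI
      rw [mem_Ioc, Fin.lt_def] at hiI
      omega
    · -- odd / even : mixed crossing, pattern i < j ≤ k < l
      obtain ⟨i, hi, rfl⟩ := mem_image.1 ha
      obtain ⟨k, hk, rfl⟩ := mem_image.1 hc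
      obtain ⟨j, hj, rfl⟩ := mem_image.1 hb
      obtain ⟨l, hl, rfl⟩ := mem_image.1 hd
      simp only [Fin.lt_def, evenEmb_val, oddEmb_val] at h1 h2 h3
      have hik : i < k := by rw [Fin.lt_def]; omega
      have hsat := h i k hik ⟨A₁, hA₁, hi, hk⟩
      have hjl : SRel π j l := ⟨A₂, hA₂, hj, hl⟩
      have hjI : j ∈ Ioc i k := by rw [mem_Ioc]; constructor <;> [rw [Fin.lt_def]; rw [Fin.le_def]] <;> omega
      have hlI : l ∈ Ioc i k := (hsat j l hjl).1 hjI
      rw [mem_Ioc, Fin.le_def] at hlI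
      omega
    · -- odd / odd : crossing in σ
      obtain ⟨a', ha', rfl⟩ := mem_image.1 ha
      obtain ⟨c', hc', rfl⟩ := mem_image.1 hc
      obtain ⟨b', hb', rfl⟩ := mem_image.1 hb
      obtain ⟨d', hd', rfl⟩ := mem_image.1 hd
      simp only [Fin.lt_def, oddEmb_val] at h1 h2 h3
      exact hσ ⟨a', b', c', d', A₁, A₂, by rw [Fin.lt_def]; omega,
        by rw [Fin.lt_def]; omega, by rw [Fin.lt_def]; omega, hA₁, hA₂,
        fun hAA => hne (by rw [hAA]), ha', hc', hb', hd'⟩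

end NCAux

namespace NCAux

variable {n m : ℕ}

lemma Sat.compl {r : Fin m → Fin m → Prop} {s : Finset (Fin m)}
    (hs : Sat r s) : Sat r sᶜ := by
  intro x y hxy
  simp only [mem_compl, hs x y hxy]

lemma sat_iff_of_rel_iff {r r' : Fin m → Fin m → Prop} (h : ∀ x y, r x y ↔ r' x y)
    {s : Finset (Fin m)} : Sat r s ↔ Sat r' s := by
  constructor <;> intro hs x y hxy
  · exact hs x y ((h x y).2 hxy)
  · exact hs x y ((h x y).1 hxy)

/-- The Kreweras complement as an element of `NCPart n`. -/
noncomputable def K1 (π : NCPart n) : NCPart n := ⟨K0 π.1, isNoncrossing_K0 _⟩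

lemma K1_greatest (π : NCPart n) :
    IsGreatest {σ : NCPart n | KrewCompat π.1 σ.1} (K1 π) := by
  constructor
  · show KrewCompat π.1 (K0 π.1)
    rw [krewCompat_iff π.2 (isNoncrossing_K0 _)]
    intro j l hjl hrel
    rw [srel_K0] at hrel
    exact (krel_of_le hjl.le).1 hrel
  · intro σ hσ
    show σ.1 ≤ (K1 π).1
    rw [le_iff_srel]
    intro x y hxy
    rw [show (K1 π).1 = K0 π.1 from rfl, srel_K0]
    rcases lt_trichotomy x y with hlt | heq | hgt
    · rw [krel_of_le hlt.le]
      exact (krewCompat_iff π.2 σ.2).1 hσ x y hlt hxy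
    · exact heq ▸ krel_refl _ _
    · apply krel_symm
      rw [krel_of_le hgt.le]
      exact (krewCompat_iff π.2 σ.2).1 hσ y x hgt (srel_symm hxy)

lemma kreweras_eq_K1 (π : NCPart n) : kreweras π = K1 π := by
  rw [kreweras, dif_pos ⟨K1 π, K1_greatest π⟩]
  exact IsGreatest.unique (Exists.choose_spec _) (K1_greatest π)

lemma K1_antitone {π σ : NCPart n} (h : π ≤ σ) : K1 σ ≤ K1 π := by
  show (K1 σ).1 ≤ (K1 π).1
  rw [le_iff_srel]
  intro x y hxy
  rw [show (K1 σ).1 = K0 σ.1 from rfl, srel_K0] at hxy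
  rw [show (K1 π).1 = K0 π.1 from rfl, srel_K0]
  have hsub := le_iff_srel.1 (show π.1 ≤ σ.1 from h)
  intro a b hab
  exact hxy a b (hsub a b hab)

/-- Lemma B1: interval to the predecessor of the next block element is saturated. -/
lemma lemB1 {π : Finpartition (univ : Finset (Fin m))} (hπ : NCR (SRel π)) {u t : Fin m}
    (hut : u < t) (hrel : SRel π u t) (hmin : ∀ b, SRel π u b → u < b → t ≤ b) :
    Sat (SRel π) (Ioo u t) := by
  refine sat_of_mono (fun x y h => srel_symm h) ?_
  intro x y hxy hx
  by_contra hy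
  rw [mem_Ioo] at hx hy
  push_neg at hy
  rcases lt_trichotomy y u with hyu | rfl | huy
  · -- y < u < x < t, crossing
    have := hπ y u x t hyu hx.1 hx.2 (srel_symm hxy) hrel
    have h2 : SRel π u x := srel_trans (srel_symm this) (srel_symm hxy)
    exact absurd (hmin x h2 hx.1) (not_le.2 hx.2)
  · have := hmin x (srel_symm hxy) hx.1
    exact absurd this (not_le.2 hx.2)
  · rcases lt_trichotomy y t with hyt | rfl | hty
    · exact absurd hyt (not_lt.2 (hy huy))
    · have h2 : SRel π u x := srel_trans hrel (srel_symm hxy)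
      exact absurd (hmin x h2 hx.1) (not_le.2 hx.2)
    · -- u < x < t < y, crossing
      have := hπ u x t y hx.1 hx.2 hty hrel hxy
      exact absurd (hmin x this hx.1) (not_le.2 hx.2)

/-- Lemma B2: if `u` is the max of its block and `m0` the min, `[m0, u]` is saturated. -/
lemma lemB2 {π : Finpartition (univ : Finset (Fin m))} (hπ : NCR (SRel π)) {u m0 : Fin m}
    (hrel : SRel π u m0) (hmin : ∀ b, SRel π u b → m0 ≤ b)
    (hmax : ∀ b, SRel π u b → b ≤ u) :
    Sat (SRel π) (Icc m0 u) := by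
  refine sat_of_mono (fun x y h => srel_symm h) ?_
  intro x y hxy hx
  by_contra hy
  rw [mem_Icc] at hx hy
  push_neg at hy
  by_cases hux : SRel π u x
  · have huy : SRel π u y := srel_trans hux hxy
    rcases lt_or_ge y m0 with h1 | h1
    · exact absurd (hmin y huy) (not_le.2 h1)
    · exact absurd (hmax y huy) (not_le.2 (hy h1))
  · have hxm0 : m0 < x := lt_of_le_of_ne hx.1 (fun h => hux (h ▸ hrel))
    have hxu : x < u := lt_of_le_of_ne hx.2 (fun h => hux (h ▸ srel_refl π u))
    rcases lt_or_ge y m0 with h1 | h1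
    · -- y < m0 < x < u, crossing
      have := hπ y m0 x u h1 hxm0 hxu (srel_symm hxy) (srel_symm hrel)
      have huy : SRel π u y := srel_trans hrel (srel_symm this)
      exact absurd (hmin y huy) (not_le.2 h1)
    · have h2 : u < y := hy h1
      -- m0 < x < u < y, crossing
      have := hπ m0 x u y hxm0 hxu h2 (srel_symm hrel) hxy
      exact hux (srel_trans hrel this)

/-- Reconstruction: the same-block relation is recoverable from the Kreweras relation. -/
lemma srel_iff_sat_krel {π : Finpartition (univ : Finset (Fin m))} (hπ : NCR (SRel π))
    {i k : Fin m} (hik : i < k) :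
    SRel π i k ↔ Sat (KRel π) (Ico i k) := by
  constructor
  · intro hrel
    refine sat_of_mono (fun x y h => krel_symm h) ?_
    intro x y hxy hx
    by_contra hy
    rw [mem_Ico] at hx hy
    push_neg at hy
    rcases lt_or_ge y i with h1 | h1
    · -- y < i ≤ x < k : interval (y, x] is saturated, contains i but not k
      have hyx : y ≤ x := (h1.trans_le hx.1).le
      have hsat : Sat (SRel π) (Ioc y x) := (krel_of_le hyx).1 (krel_symm hxy)
      have hiI : i ∈ Ioc y x := mem_Ioc.2 ⟨h1, hx.1⟩
      have hkI : k ∈ Ioc y x := (hsat i k hrel).1 hiI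
      rw [mem_Ioc] at hkI
      exact absurd hkI.2 (not_le.2 hx.2)
    · have h2 : k ≤ y := hy h1
      have hxy' : x ≤ y := (hx.2.trans_le h2).le
      have hsat : Sat (SRel π) (Ioc x y) := (krel_of_le hxy').1 hxy
      have hkI : k ∈ Ioc x y := mem_Ioc.2 ⟨hx.2, h2⟩
      have hiI : i ∈ Ioc x y := (hsat i k hrel).2 hkI
      rw [mem_Ioc] at hiI
      exact absurd hx.1 (not_le.2 hiI.1)
  · intro hsat
    classical
    set U : Finset (Fin m) := univ.filter (fun b => SRel π i b ∧ b < k) with hU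
    have hiU : i ∈ U := by
      rw [hU, mem_filter]
      exact ⟨mem_univ _, srel_refl π i, hik⟩
    set u : Fin m := U.max' ⟨i, hiU⟩ with hu
    have huU : u ∈ U := U.max'_mem _
    rw [hU, mem_filter] at huU
    have hiu : SRel π i u := huU.2.1
    have huk : u < k := huU.2.2
    have hiu' : i ≤ u := U.le_max' i hiU
    by_cases hA : ∃ b, SRel π u b ∧ u < b
    · set T : Finset (Fin m) := univ.filter (fun b => SRel π u b ∧ u < b) with hT
      have hTne : T.Nonempty := by
        obtain ⟨b, hb⟩ := hA
        exact ⟨b, by rw [hT, mem_filter]; exact ⟨mem_univ _, hb⟩⟩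
      set t : Fin m := T.min' hTne with ht
      have htT := mem_filter.1 (T.min'_mem hTne)
      have hut : u < t := htT.2.2
      have hrelut : SRel π u t := htT.2.1
      have hmin : ∀ b, SRel π u b → u < b → t ≤ b := fun b h1 h2 =>
        T.min'_le b (by rw [hT, mem_filter]; exact ⟨mem_univ _, h1, h2⟩)
      have hB1 := lemB1 hπ hut hrelut hmin
      obtain ⟨t', ht'val⟩ : ∃ t' : Fin m, t'.val = t.val - 1 :=
        ⟨⟨t.val - 1, by omega⟩, rfl⟩
      have hIoo : Ioo u t = Ioc u t' := by
        ext s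
        simp only [mem_Ioo, mem_Ioc, Fin.lt_def, Fin.le_def, ht'val]
        omega
      have hut' : u ≤ t' := by
        rw [Fin.le_def, ht'val]
        have := Fin.lt_def.1 hut
        omega
      have hKrel : KRel π u t' := (krel_of_le hut').2 (sat_congr hIoo hB1)
      have huI : u ∈ Ico i k := mem_Ico.2 ⟨hiu', huk⟩
      have ht'I : t' ∈ Ico i k := (hsat u t' hKrel).1 huI
      rw [mem_Ico, Fin.lt_def] at ht'I
      have htk : t.val ≤ k.val := by
        have := Fin.lt_def.1 hut
        omega
      have hit : SRel π i t := srel_trans hiu hrelut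
      rcases lt_or_eq_of_le htk with hlt | heq
      · have : t ∈ U := by
          rw [hU, mem_filter]
          exact ⟨mem_univ _, hit, Fin.lt_def.2 hlt⟩
        exact absurd (U.le_max' t this) (not_le.2 hut)
      · have : t = k := Fin.ext heq
        exact this ▸ hit
    · push_neg at hA
      have hmax : ∀ b, SRel π u b → b ≤ u := hA
      set M : Finset (Fin m) := univ.filter (fun b => SRel π u b) with hM
      have huM : u ∈ M := by rw [hM, mem_filter]; exact ⟨mem_univ _, srel_refl π u⟩
      set m0 : Fin m := M.min' ⟨u, huM⟩ with hm0
      have hm0M := mem_filter.1 (M.min'_mem (⟨u, huM⟩ : M.Nonempty))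
      have hm0rel : SRel π u m0 := hm0M.2
      have hmin : ∀ b, SRel π u b → m0 ≤ b := fun b h1 =>
        M.min'_le b (by rw [hM, mem_filter]; exact ⟨mem_univ _, h1⟩)
      have hm0i : m0 ≤ i := hmin i (srel_symm hiu)
      have hB2 := lemB2 hπ hm0rel hmin hmax
      by_cases h0 : m0.val = 0
      · obtain ⟨last, hlv⟩ : ∃ last : Fin m, last.val = m - 1 :=
          ⟨⟨m - 1, by omega⟩, rfl⟩
        have hcompl : (Icc m0 u)ᶜ = Ioc u last := by
          ext s
          simp only [mem_compl, mem_Icc, mem_Ioc, Fin.lt_def, Fin.le_def, hlv, not_and, not_le]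
          have := s.isLt
          omega
        have hsatc : Sat (SRel π) (Ioc u last) := sat_congr hcompl hB2.compl
        have hulast : u ≤ last := by
          rw [Fin.le_def, hlv]
          have := u.isLt
          omega
        have hKrel : KRel π u last := (krel_of_le hulast).2 hsatc
        have huI : u ∈ Ico i k := mem_Ico.2 ⟨hiu', huk⟩
        have hlastI : last ∈ Ico i k := (hsat u last hKrel).1 huI
        rw [mem_Ico, Fin.lt_def] at hlastI
        have := k.isLt
        omega
      · obtain ⟨m0', hm0v⟩ : ∃ m0' : Fin m, m0'.val = m0.val - 1 :=
          ⟨⟨m0.val - 1, by omega⟩, rfl⟩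
        have hIcc : Icc m0 u = Ioc m0' u := by
          ext s
          simp only [mem_Icc, mem_Ioc, Fin.lt_def, Fin.le_def, hm0v]
          omega
        have hm0'u : m0' ≤ u := by
          rw [Fin.le_def, hm0v]
          have := Fin.le_def.1 (hm0i.trans hiu')
          omega
        have hKrel : KRel π u m0' := krel_symm ((krel_of_le hm0'u).2 (sat_congr hIcc hB2))
        have huI : u ∈ Ico i k := mem_Ico.2 ⟨hiu', huk⟩
        have hm0'I : m0' ∈ Ico i k := (hsat u m0' hKrel).1 huI
        rw [mem_Ico, Fin.le_def] at hm0'I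
        have := Fin.le_def.1 hm0i
        omega

/-- `K0` determines the partition. -/
lemma eq_of_K0_eq {π σ : Finpartition (univ : Finset (Fin m))}
    (hπ : NCR (SRel π)) (hσ : NCR (SRel σ)) (h : K0 π = K0 σ) : π = σ := by
  have hkrel : ∀ x y, KRel π x y ↔ KRel σ x y := by
    intro x y
    rw [← srel_K0, ← srel_K0, h]
  apply eq_of_srel_iff
  intro x y
  rcases lt_trichotomy x y with hlt | rfl | hgt
  · rw [srel_iff_sat_krel hπ hlt, srel_iff_sat_krel hσ hlt]
    exact sat_iff_of_rel_iff hkrel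
  · exact ⟨fun _ => srel_refl σ x, fun _ => srel_refl π x⟩
  · constructor
    · intro hr
      have := (srel_iff_sat_krel hπ hgt).1 (srel_symm hr)
      exact srel_symm ((srel_iff_sat_krel hσ hgt).2 ((sat_iff_of_rel_iff hkrel).1 this))
    · intro hr
      have := (srel_iff_sat_krel hσ hgt).1 (srel_symm hr)
      exact srel_symm ((srel_iff_sat_krel hπ hgt).2 ((sat_iff_of_rel_iff hkrel).2 this))

lemma K1_injective : Function.Injective (K1 (n := n)) := by
  intro π σ h
  have h' : K0 π.1 = K0 σ.1 := congrArg Subtype.val h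
  exact Subtype.ext (eq_of_K0_eq (isNoncrossing_iff_ncr.1 π.2) (isNoncrossing_iff_ncr.1 σ.2) h')

instance : Finite (NCPart n) := by
  have : Finite (Finpartition (univ : Finset (Fin n))) := Finite.of_fintype _
  exact Subtype.finite

lemma K1_bijective : Function.Bijective (K1 (n := n)) :=
  (Finite.injective_iff_bijective).1 K1_injective

end NCAux

namespace NCAux

variable {n : ℕ}

/-! ### Counting: the gluing decomposition -/

def castL (j : Fin (n + 1)) (a : Fin j.val) : Fin (n + 1) :=
  ⟨a.val, by have := a.isLt; have := j.isLt; omega⟩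

def castR (j : Fin (n + 1)) (a : Fin (n - j.val)) : Fin (n + 1) :=
  ⟨a.val + j.val + 1, by have := a.isLt; have := j.isLt; omega⟩

/-- Gluing a partition of the left part, a partition of the right part, where the block
of `j` is additionally joined with the class of `0` on the left. -/
def glue (j : Fin (n + 1)) (rL : Fin j.val → Fin j.val → Prop)
    (rR : Fin (n - j.val) → Fin (n - j.val) → Prop) (x y : Fin (n + 1)) : Prop :=
  (∃ (hx : x.val < j.val) (hy : y.val < j.val), rL ⟨x.val, hx⟩ ⟨y.val, hy⟩)
  ∨ (∃ (hx : j.val < x.val) (hy : j.val < y.val),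
      rR ⟨x.val - j.val - 1, by have := x.isLt; omega⟩
         ⟨y.val - j.val - 1, by have := y.isLt; omega⟩)
  ∨ (x = j ∧ y = j)
  ∨ (x = j ∧ ∃ (hy : y.val < j.val),
      rL ⟨0, Nat.lt_of_le_of_lt (Nat.zero_le _) hy⟩ ⟨y.val, hy⟩)
  ∨ (y = j ∧ ∃ (hx : x.val < j.val),
      rL ⟨0, Nat.lt_of_le_of_lt (Nat.zero_le _) hx⟩ ⟨x.val, hx⟩)

variable {j : Fin (n + 1)} {rL : Fin j.val → Fin j.val → Prop}
  {rR : Fin (n - j.val) → Fin (n - j.val) → Prop}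

lemma glue_equivalence (hL : Equivalence rL) (hR : Equivalence rR) :
    Equivalence (glue j rL rR) := by
  constructor
  · intro x
    rcases lt_trichotomy x.val j.val with h | h | h
    · exact Or.inl ⟨h, h, hL.refl _⟩
    · exact Or.inr (Or.inr (Or.inl ⟨Fin.ext h, Fin.ext h⟩))
    · exact Or.inr (Or.inl ⟨h, h, hR.refl _⟩)
  · intro x y h
    rcases h with ⟨hx, hy, r⟩ | ⟨hx, hy, r⟩ | ⟨e1, e2⟩ | ⟨e1, hy, r⟩ | ⟨e1, hx, r⟩
    · exact Or.inl ⟨hy, hx, hL.symm r⟩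
    · exact Or.inr (Or.inl ⟨hy, hx, hR.symm r⟩)
    · exact Or.inr (Or.inr (Or.inl ⟨e2, e1⟩))
    · exact Or.inr (Or.inr (Or.inr (Or.inr ⟨e1, hy, r⟩)))
    · exact Or.inr (Or.inr (Or.inr (Or.inl ⟨e1, hx, r⟩)))
  · intro x y z h1 h2
    rcases h1 with ⟨hx1, hy1, r1⟩ | ⟨hx1, hy1, r1⟩ | ⟨e1, e2⟩ | ⟨e1, hy1, r1⟩ | ⟨e1, hx1, r1⟩
    · -- D1 : x,y < j
      rcases h2 with ⟨hx2, hy2, r2⟩ | ⟨hx2, hy2, r2⟩ | ⟨f1, f2⟩ | ⟨f1, hy2, r2⟩ | ⟨f1, hx2, r2⟩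
      · exact Or.inl ⟨hx1, hy2, hL.trans r1 r2⟩
      · omega
      · have := congrArg Fin.val f1; omega
      · have := congrArg Fin.val f1; omega
      · exact Or.inr (Or.inr (Or.inr (Or.inr ⟨f1, hx1, hL.trans r2 (hL.symm r1)⟩)))
    · -- D2 : x,y > j
      rcases h2 with ⟨hx2, hy2, r2⟩ | ⟨hx2, hy2, r2⟩ | ⟨f1, f2⟩ | ⟨f1, hy2, r2⟩ | ⟨f1, hx2, r2⟩
      · omega
      · exact Or.inr (Or.inl ⟨hx1, hy2, hR.trans r1 r2⟩)
      · have := congrArg Fin.val f1; omega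
      · have := congrArg Fin.val f1; omega
      · have := congrArg Fin.val f1; omega
    · -- D3 : x = j, y = j
      subst e1; subst e2
      exact h2
    · -- D4 : x = j, y < j, rL 0 y
      rcases h2 with ⟨hx2, hy2, r2⟩ | ⟨hx2, hy2, r2⟩ | ⟨f1, f2⟩ | ⟨f1, hy2, r2⟩ | ⟨f1, hx2, r2⟩
      · exact Or.inr (Or.inr (Or.inr (Or.inl ⟨e1, hy2, hL.trans r1 r2⟩)))
      · omega
      · have := congrArg Fin.val f1; omega
      · have := congrArg Fin.val f1; omega
      · exact Or.inr (Or.inr (Or.inl ⟨e1, f1⟩))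
    · -- D5 : y = j, x < j, rL 0 x
      subst e1
      rcases h2 with ⟨hx2, hy2, r2⟩ | ⟨hx2, hy2, r2⟩ | ⟨f1, f2⟩ | ⟨f1, hy2, r2⟩ | ⟨f1, hx2, r2⟩
      · omega
      · omega
      · exact Or.inr (Or.inr (Or.inr (Or.inr ⟨f2, hx1, r1⟩)))
      · exact Or.inl ⟨hx1, hy2, hL.trans (hL.symm r1) r2⟩
      · omega

lemma glue_ncr (hL : Equivalence rL) (hLn : NCR rL) (hRn : NCR rR) :
    NCR (glue j rL rR) := by
  intro a b c d hab hbc hcd h1 h2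
  have hab' := Fin.lt_def.1 hab
  have hbc' := Fin.lt_def.1 hbc
  have hcd' := Fin.lt_def.1 hcd
  rcases h1 with ⟨ha1, hc1, r1⟩ | ⟨ha1, hc1, r1⟩ | ⟨e1, e2⟩ | ⟨e1, hc1, r1⟩ | ⟨e1, ha1, r1⟩
  · -- a, c < j
    have hb1 : b.val < j.val := by omega
    rcases h2 with ⟨hb2, hd2, r2⟩ | ⟨hb2, hd2, r2⟩ | ⟨f1, f2⟩ | ⟨f1, hd2, r2⟩ | ⟨f1, hb2, r2⟩
    · exact Or.inl ⟨ha1, hb1, hLn _ _ _ _ (Fin.mk_lt_mk.2 hab')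
        (Fin.mk_lt_mk.2 hbc') (Fin.mk_lt_mk.2 hcd') r1 r2⟩
    · omega
    · have := congrArg Fin.val f1; omega
    · have := congrArg Fin.val f1; omega
    · -- d = j, rL 0 b
      rcases Nat.eq_zero_or_pos a.val with h0 | h0
      · refine Or.inl ⟨ha1, hb1, ?_⟩
        have : (⟨a.val, ha1⟩ : Fin j.val) = ⟨0, Nat.lt_of_le_of_lt (Nat.zero_le _) hb2⟩ :=
          Fin.ext h0
        rw [this]
        exact r2
      · refine Or.inl ⟨ha1, hb1, ?_⟩
        have h0a := hLn ⟨0, Nat.lt_of_le_of_lt (Nat.zero_le _) hb2⟩ ⟨a.val, ha1⟩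
          ⟨b.val, hb1⟩ ⟨c.val, hc1⟩ (Fin.mk_lt_mk.2 h0)
          (Fin.mk_lt_mk.2 hab') (Fin.mk_lt_mk.2 hbc') r2 r1
        exact hL.trans (hL.symm h0a) r2
  · -- a, c > j
    have hb1 : j.val < b.val := by omega
    rcases h2 with ⟨hb2, hd2, r2⟩ | ⟨hb2, hd2, r2⟩ | ⟨f1, f2⟩ | ⟨f1, hd2, r2⟩ | ⟨f1, hb2, r2⟩
    · omega
    · exact Or.inr (Or.inl ⟨ha1, hb1, hRn _ _ _ _ (Fin.mk_lt_mk.2 (by omega))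
        (Fin.mk_lt_mk.2 (by omega)) (Fin.mk_lt_mk.2 (by omega)) r1 r2⟩)
    · have := congrArg Fin.val f1; omega
    · have := congrArg Fin.val f1; omega
    · have := congrArg Fin.val f1; omega
  · have := congrArg Fin.val e1; have := congrArg Fin.val e2; omega
  · have := congrArg Fin.val e1; omega
  · -- c = j, a < j : b < j < d, no possible relation for (b, d)
    have hcj := congrArg Fin.val e1
    have hb1 : b.val < j.val := by omega
    have hd1 : j.val < d.val := by omega
    rcases h2 with ⟨hb2, hd2, r2⟩ | ⟨hb2, hd2, r2⟩ | ⟨f1, f2⟩ | ⟨f1, hd2, r2⟩ | ⟨f1, hb2, r2⟩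
    · omega
    · omega
    · have := congrArg Fin.val f1; omega
    · have := congrArg Fin.val f1; omega
    · have := congrArg Fin.val f1; omega

end NCAux

namespace NCAux

variable {n : ℕ}

/-- The largest element of the block of `0`. -/
noncomputable def maxB (π : Finpartition (univ : Finset (Fin (n + 1)))) : Fin (n + 1) :=
  (π.part 0).max' ⟨0, π.mem_part (mem_univ 0)⟩

lemma srel_zero_maxB (π : Finpartition (univ : Finset (Fin (n + 1)))) :
    SRel π 0 (maxB π) :=
  srel_iff_mem_part.2 ((π.part 0).max'_mem _)

lemma le_maxB {π : Finpartition (univ : Finset (Fin (n + 1)))} {y : Fin (n + 1)}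
    (h : SRel π 0 y) : y ≤ maxB π :=
  (π.part 0).le_max' y (srel_iff_mem_part.1 h)

/-- The interval `[0, maxB π]` is saturated. -/
lemma sat_le_maxB {π : Finpartition (univ : Finset (Fin (n + 1)))} (hπ : NCR (SRel π))
    {x y : Fin (n + 1)} (hxy : SRel π x y) (hx : x ≤ maxB π) : y ≤ maxB π := by
  by_contra hy
  rw [not_le] at hy
  by_cases h0 : SRel π 0 x
  · exact absurd (le_maxB (srel_trans h0 hxy)) (not_le.2 hy)
  · have hx0 : (0 : Fin (n + 1)) < x := by
      rcases Nat.eq_zero_or_pos x.val with h | h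
      · exact absurd (by rw [show x = 0 from Fin.ext (by simp [h])]; exact srel_refl π 0) h0
      · rw [Fin.lt_def]; simpa using h
    have hxj : x < maxB π := by
      rcases lt_or_eq_of_le hx with h | h
      · exact h
      · subst h
        exact absurd (le_maxB (srel_trans (srel_zero_maxB π) hxy)) (not_le.2 hy)
    have := hπ 0 x (maxB π) y hx0 hxj hy (srel_zero_maxB π) hxy
    exact h0 this

/-- Left and right restriction relations of a partition. -/
def rLp (π : Finpartition (univ : Finset (Fin (n + 1)))) :
    Fin (maxB π).val → Fin (maxB π).val → Prop :=
  fun a b => SRel π (castL (maxB π) a) (castL (maxB π) b)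

def rRp (π : Finpartition (univ : Finset (Fin (n + 1)))) :
    Fin (n - (maxB π).val) → Fin (n - (maxB π).val) → Prop :=
  fun a b => SRel π (castR (maxB π) a) (castR (maxB π) b)

lemma rLp_equivalence (π : Finpartition (univ : Finset (Fin (n + 1)))) :
    Equivalence (rLp π) :=
  ⟨fun _ => srel_refl π _, srel_symm, srel_trans⟩

lemma rRp_equivalence (π : Finpartition (univ : Finset (Fin (n + 1)))) :
    Equivalence (rRp π) :=
  ⟨fun _ => srel_refl π _, srel_symm, srel_trans⟩

lemma ncr_comap {m k : ℕ} {r : Fin m → Fin m → Prop} (h : NCR r) {f : Fin k → Fin m}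
    (hf : StrictMono f) : NCR (fun a b => r (f a) (f b)) :=
  fun a b c d h1 h2 h3 => h (f a) (f b) (f c) (f d) (hf h1) (hf h2) (hf h3)

lemma castL_strictMono (j : Fin (n + 1)) : StrictMono (castL j) := by
  intro a b h
  rw [Fin.lt_def] at h ⊢
  exact h

lemma castR_strictMono (j : Fin (n + 1)) : StrictMono (castR j) := by
  intro a b h
  rw [Fin.lt_def] at h ⊢
  simp only [castR]
  omega

lemma rLp_ncr {π : Finpartition (univ : Finset (Fin (n + 1)))} (hπ : NCR (SRel π)) :
    NCR (rLp π) := ncr_comap hπ (castL_strictMono _)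

lemma rRp_ncr {π : Finpartition (univ : Finset (Fin (n + 1)))} (hπ : NCR (SRel π)) :
    NCR (rRp π) := ncr_comap hπ (castR_strictMono _)

/-- Reconstruction of a noncrossing partition from its two restrictions. -/
lemma srel_iff_glue {π : Finpartition (univ : Finset (Fin (n + 1)))} (hπ : NCR (SRel π))
    (x y : Fin (n + 1)) :
    SRel π x y ↔ glue (maxB π) (rLp π) (rRp π) x y := by
  set j := maxB π with hjdef
  constructor
  · intro h
    rcases lt_trichotomy x.val j.val with hx | hx | hx <;>
      rcases lt_trichotomy y.val j.val with hy | hy | hy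
    · -- x < j, y < j
      refine Or.inl ⟨hx, hy, ?_⟩
      show SRel π (castL j ⟨x.val, hx⟩) (castL j ⟨y.val, hy⟩)
      have e1 : castL j ⟨x.val, hx⟩ = x := Fin.ext rfl
      have e2 : castL j ⟨y.val, hy⟩ = y := Fin.ext rfl
      rw [e1, e2]; exact h
    · -- x < j, y = j
      refine Or.inr (Or.inr (Or.inr (Or.inr ⟨Fin.ext hy, hx, ?_⟩)))
      show SRel π (castL j _) (castL j ⟨x.val, hx⟩)
      have e1 : castL j (⟨0, Nat.lt_of_le_of_lt (Nat.zero_le _) hx⟩ : Fin j.val) =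
          (0 : Fin (n + 1)) := Fin.ext (by simp [castL])
      have e2 : castL j ⟨x.val, hx⟩ = x := Fin.ext rfl
      rw [e1, e2]
      have hyy : y = j := Fin.ext hy
      have hxj : SRel π x j := by rw [← hyy]; exact h
      exact srel_trans (srel_zero_maxB π) (srel_symm hxj)
    · -- x < j, y > j : contradiction with saturation
      have := sat_le_maxB hπ h (by rw [Fin.le_def]; omega)
      rw [Fin.le_def] at this
      omega
    · -- x = j, y < j
      refine Or.inr (Or.inr (Or.inr (Or.inl ⟨Fin.ext hx, hy, ?_⟩)))
      show SRel π (castL j _) (castL j ⟨y.val, hy⟩)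
      have e1 : castL j (⟨0, Nat.lt_of_le_of_lt (Nat.zero_le _) hy⟩ : Fin j.val) =
          (0 : Fin (n + 1)) := Fin.ext (by simp [castL])
      have e2 : castL j ⟨y.val, hy⟩ = y := Fin.ext rfl
      rw [e1, e2]
      have hxx : x = j := Fin.ext hx
      have hyj : SRel π j y := by rw [← hxx]; exact h
      exact srel_trans (srel_zero_maxB π) hyj
    · exact Or.inr (Or.inr (Or.inl ⟨Fin.ext hx, Fin.ext hy⟩))
    · -- x = j, y > j : contradiction
      have hxj : x = j := Fin.ext hx
      have hjy : SRel π j y := by rw [← hxj]; exact h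
      have : SRel π 0 y := srel_trans (srel_zero_maxB π) hjy
      have := Fin.le_def.1 (le_maxB this)
      omega
    · -- x > j, y < j : contradiction by symmetry
      have := sat_le_maxB hπ (srel_symm h) (by rw [Fin.le_def]; omega)
      rw [Fin.le_def] at this
      omega
    · -- x > j, y = j
      have hyj : y = j := Fin.ext hy
      have hjx : SRel π j x := by rw [← hyj]; exact srel_symm h
      have : SRel π 0 x := srel_trans (srel_zero_maxB π) hjx
      have := Fin.le_def.1 (le_maxB this)
      omega
    · -- x > j, y > j
      refine Or.inr (Or.inl ⟨hx, hy, ?_⟩)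
      show SRel π (castR j _) (castR j _)
      have e1 : castR j ⟨x.val - j.val - 1, by have := x.isLt; omega⟩ = x :=
        Fin.ext (by simp [castR]; omega)
      have e2 : castR j ⟨y.val - j.val - 1, by have := y.isLt; omega⟩ = y :=
        Fin.ext (by simp [castR]; omega)
      rw [e1, e2]; exact h
  · intro h
    rcases h with ⟨hx, hy, r⟩ | ⟨hx, hy, r⟩ | ⟨e1, e2⟩ | ⟨e1, hy, r⟩ | ⟨e1, hx, r⟩
    · have r' : SRel π (castL j ⟨x.val, hx⟩) (castL j ⟨y.val, hy⟩) := r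
      have e1 : castL j ⟨x.val, hx⟩ = x := Fin.ext rfl
      have e2 : castL j ⟨y.val, hy⟩ = y := Fin.ext rfl
      rwa [e1, e2] at r'
    · have r' : SRel π (castR j ⟨x.val - j.val - 1, by have := x.isLt; omega⟩)
          (castR j ⟨y.val - j.val - 1, by have := y.isLt; omega⟩) := r
      have e1 : castR j ⟨x.val - j.val - 1, by have := x.isLt; omega⟩ = x :=
        Fin.ext (by simp [castR]; omega)
      have e2 : castR j ⟨y.val - j.val - 1, by have := y.isLt; omega⟩ = y :=
        Fin.ext (by simp [castR]; omega)
      rwa [e1, e2] at r'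
    · rw [e1, e2]; exact srel_refl π j
    · subst e1
      have e0 : castL j (⟨0, Nat.lt_of_le_of_lt (Nat.zero_le _) hy⟩ : Fin j.val) =
          (0 : Fin (n + 1)) := Fin.ext (by simp [castL])
      have e2 : castL j ⟨y.val, hy⟩ = y := Fin.ext rfl
      have r'' : SRel π (castL j ⟨0, Nat.lt_of_le_of_lt (Nat.zero_le _) hy⟩)
          (castL j ⟨y.val, hy⟩) := r
      have r' : SRel π 0 y := by rwa [e0, e2] at r''
      exact srel_trans (srel_symm (srel_zero_maxB π)) r'
    · subst e1
      have e0 : castL j (⟨0, Nat.lt_of_le_of_lt (Nat.zero_le _) hx⟩ : Fin j.val) =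
          (0 : Fin (n + 1)) := Fin.ext (by simp [castL])
      have e2 : castL j ⟨x.val, hx⟩ = x := Fin.ext rfl
      have r'' : SRel π (castL j ⟨0, Nat.lt_of_le_of_lt (Nat.zero_le _) hx⟩)
          (castL j ⟨x.val, hx⟩) := r
      have r' : SRel π 0 x := by rwa [e0, e2] at r''
      exact srel_symm (srel_trans (srel_symm (srel_zero_maxB π)) r')

end NCAux

namespace NCAux

variable {n : ℕ}

lemma glue_castL_iff {j : Fin (n + 1)} {rL : Fin j.val → Fin j.val → Prop}
    {rR : Fin (n - j.val) → Fin (n - j.val) → Prop} (a b : Fin j.val) :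
    glue j rL rR (castL j a) (castL j b) ↔ rL a b := by
  constructor
  · intro h
    rcases h with ⟨hx, hy, r⟩ | ⟨hx, hy, r⟩ | ⟨e1, e2⟩ | ⟨e1, hy, r⟩ | ⟨e1, hx, r⟩
    · have ea : (⟨(castL j a).val, hx⟩ : Fin j.val) = a := Fin.ext rfl
      have eb : (⟨(castL j b).val, hy⟩ : Fin j.val) = b := Fin.ext rfl
      rwa [ea, eb] at r
    · have := a.isLt
      have hv : (castL j a).val = a.val := rfl
      omega
    · have := congrArg Fin.val e1
      have := a.isLt
      have hv : (castL j a).val = a.val := rfl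
      omega
    · have := congrArg Fin.val e1
      have := a.isLt
      have hv : (castL j a).val = a.val := rfl
      omega
    · have := congrArg Fin.val e1
      have := b.isLt
      have hv : (castL j b).val = b.val := rfl
      omega
  · intro h
    refine Or.inl ⟨a.isLt, b.isLt, ?_⟩
    have ea : (⟨(castL j a).val, a.isLt⟩ : Fin j.val) = a := Fin.ext rfl
    have eb : (⟨(castL j b).val, b.isLt⟩ : Fin j.val) = b := Fin.ext rfl
    rw [ea, eb]; exact h

lemma glue_castR_iff {j : Fin (n + 1)} {rL : Fin j.val → Fin j.val → Prop}
    {rR : Fin (n - j.val) → Fin (n - j.val) → Prop} (a b : Fin (n - j.val)) :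
    glue j rL rR (castR j a) (castR j b) ↔ rR a b := by
  have hva : (castR j a).val = a.val + j.val + 1 := rfl
  have hvb : (castR j b).val = b.val + j.val + 1 := rfl
  constructor
  · intro h
    rcases h with ⟨hx, hy, r⟩ | ⟨hx, hy, r⟩ | ⟨e1, e2⟩ | ⟨e1, hy, r⟩ | ⟨e1, hx, r⟩
    · omega
    · have ea : (⟨(castR j a).val - j.val - 1, by have := a.isLt; omega⟩ : Fin (n - j.val)) = a :=
        Fin.ext (by show (castR j a).val - j.val - 1 = a.val; omega)
      have eb : (⟨(castR j b).val - j.val - 1, by have := b.isLt; omega⟩ : Fin (n - j.val)) = b :=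
        Fin.ext (by show (castR j b).val - j.val - 1 = b.val; omega)
      rwa [ea, eb] at r
    · have := congrArg Fin.val e1; omega
    · have := congrArg Fin.val e1; omega
    · have := congrArg Fin.val e1; omega
  · intro h
    refine Or.inr (Or.inl ⟨by omega, by omega, ?_⟩)
    have ea : (⟨(castR j a).val - j.val - 1, by have := (castR j a).isLt; omega⟩ :
        Fin (n - j.val)) = a := Fin.ext (by show (castR j a).val - j.val - 1 = a.val; omega)
    have eb : (⟨(castR j b).val - j.val - 1, by have := (castR j b).isLt; omega⟩ :
        Fin (n - j.val)) = b := Fin.ext (by show (castR j b).val - j.val - 1 = b.val; omega)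
    rw [ea, eb]; exact h

lemma isNoncrossing_ofRel {m : ℕ} {r : Fin m → Fin m → Prop} {hr : Equivalence r}
    (h : NCR r) : IsNoncrossing (ofRel r hr) := by
  rw [isNoncrossing_iff_ncr]
  intro a b c d h1 h2 h3 h4 h5
  rw [srel_ofRel] at h4 h5 ⊢
  exact h a b c d h1 h2 h3 h4 h5

/-- Forward map of the structural decomposition. -/
noncomputable def Fw (π : NCPart (n + 1)) :
    Σ i : Fin (n + 1), NCPart i.val × NCPart (n - i.val) :=
  ⟨maxB π.1,
    ⟨ofRel (rLp π.1) (rLp_equivalence π.1),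
      isNoncrossing_ofRel (rLp_ncr (isNoncrossing_iff_ncr.1 π.2))⟩,
    ⟨ofRel (rRp π.1) (rRp_equivalence π.1),
      isNoncrossing_ofRel (rRp_ncr (isNoncrossing_iff_ncr.1 π.2))⟩⟩

/-- Backward map of the structural decomposition. -/
noncomputable def Bw (x : Σ i : Fin (n + 1), NCPart i.val × NCPart (n - i.val)) :
    NCPart (n + 1) :=
  ⟨ofRel (glue x.1 (SRel x.2.1.1) (SRel x.2.2.1))
      (glue_equivalence ⟨fun _ => srel_refl _ _, srel_symm, srel_trans⟩
        ⟨fun _ => srel_refl _ _, srel_symm, srel_trans⟩),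
    isNoncrossing_ofRel (glue_ncr ⟨fun _ => srel_refl _ _, srel_symm, srel_trans⟩
      (isNoncrossing_iff_ncr.1 x.2.1.2) (isNoncrossing_iff_ncr.1 x.2.2.2))⟩

lemma Bw_Fw (π : NCPart (n + 1)) : Bw (Fw π) = π := by
  apply Subtype.ext
  apply eq_of_srel_iff
  intro x y
  show SRel (ofRel _ _) x y ↔ _
  rw [srel_ofRel]
  have hL : SRel (Fw π).2.1.1 = rLp π.1 :=
    funext fun a => funext fun b => propext srel_ofRel
  have hR : SRel (Fw π).2.2.1 = rRp π.1 :=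
    funext fun a => funext fun b => propext srel_ofRel
  show glue (maxB π.1) (SRel (Fw π).2.1.1) (SRel (Fw π).2.2.1) x y ↔ _
  show glue (maxB π.1) (SRel (ofRel (rLp π.1) (rLp_equivalence π.1)))
    (SRel (ofRel (rRp π.1) (rRp_equivalence π.1))) x y ↔ _
  rw [show SRel (ofRel (rLp π.1) (rLp_equivalence π.1)) = rLp π.1 from
      funext fun a => funext fun b => propext srel_ofRel,
    show SRel (ofRel (rRp π.1) (rRp_equivalence π.1)) = rRp π.1 from
      funext fun a => funext fun b => propext srel_ofRel]
  exact (srel_iff_glue (isNoncrossing_iff_ncr.1 π.2) x y).symm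

end NCAux

namespace NCAux

variable {n : ℕ}

lemma maxB_Bw (x : Σ i : Fin (n + 1), NCPart i.val × NCPart (n - i.val)) :
    maxB (Bw x).1 = x.1 := by
  obtain ⟨i, L, R⟩ := x
  have hsrel : ∀ a b, SRel (Bw ⟨i, L, R⟩).1 a b ↔
      glue i (SRel L.1) (SRel R.1) a b := fun a b => srel_ofRel
  apply le_antisymm
  · apply Finset.max'_le
    intro b hb
    have hg := (hsrel 0 b).1 (srel_iff_mem_part.2 hb)
    have h00 : (0 : Fin (n + 1)).val = 0 := rfl
    rcases hg with ⟨hx, hy, r⟩ | ⟨hx, hy, r⟩ | ⟨e1, e2⟩ | ⟨e1, hy, r⟩ | ⟨e1, hx, r⟩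
    · exact (Fin.lt_def.2 hy).le
    · omega
    · exact le_of_eq e2
    · exact (Fin.lt_def.2 hy).le
    · exact le_of_eq e1
  · apply Finset.le_max'
    rw [← srel_iff_mem_part]
    apply (hsrel 0 i).2
    rcases Nat.eq_zero_or_pos i.val with h0 | h0
    · exact Or.inr (Or.inr (Or.inl ⟨Fin.ext (by simpa using h0.symm), rfl⟩))
    · have h0' : (0 : Fin (n + 1)).val < i.val := by simpa using h0
      refine Or.inr (Or.inr (Or.inr (Or.inr ⟨rfl, h0', ?_⟩)))
      have e : (⟨(0 : Fin (n + 1)).val, h0'⟩ : Fin i.val) =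
          ⟨0, Nat.lt_of_le_of_lt (Nat.zero_le _) h0'⟩ := Fin.ext (by simp)
      rw [e]
      exact srel_refl L.1 _

lemma Bw_injective : Function.Injective (Bw (n := n)) := by
  intro x y h
  obtain ⟨i, L, R⟩ := x
  obtain ⟨i', L', R'⟩ := y
  have hi : i = i' := by
    have a1 := maxB_Bw ⟨i, L, R⟩
    have a2 := maxB_Bw ⟨i', L', R'⟩
    rw [h] at a1
    exact a1.symm.trans a2
  subst hi
  have hsrel : ∀ a b, SRel (Bw ⟨i, L, R⟩).1 a b ↔ SRel (Bw ⟨i, L', R'⟩).1 a b := by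
    intro a b
    rw [h]
  have hglue : ∀ a b, glue i (SRel L.1) (SRel R.1) a b ↔
      glue i (SRel L'.1) (SRel R'.1) a b := by
    intro a b
    rw [← srel_ofRel (hr := glue_equivalence ⟨fun _ => srel_refl _ _, srel_symm, srel_trans⟩
      ⟨fun _ => srel_refl _ _, srel_symm, srel_trans⟩),
      ← srel_ofRel (hr := glue_equivalence ⟨fun _ => srel_refl _ _, srel_symm, srel_trans⟩
      ⟨fun _ => srel_refl _ _, srel_symm, srel_trans⟩)]
    exact hsrel a b
  have hL : L = L' := by
    apply Subtype.ext
    apply eq_of_srel_iff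
    intro a b
    have := hglue (castL i a) (castL i b)
    rwa [glue_castL_iff, glue_castL_iff] at this
  have hR : R = R' := by
    apply Subtype.ext
    apply eq_of_srel_iff
    intro a b
    have := hglue (castR i a) (castR i b)
    rwa [glue_castR_iff, glue_castR_iff] at this
  rw [hL, hR]

lemma Fw_Bw (x : Σ i : Fin (n + 1), NCPart i.val × NCPart (n - i.val)) :
    Fw (Bw x) = x :=
  Bw_injective (Bw_Fw (Bw x))

/-- The structural equivalence behind the Catalan recurrence. -/
noncomputable def ncpartEquiv (n : ℕ) :
    (Σ i : Fin (n + 1), NCPart i.val × NCPart (n - i.val)) ≃ NCPart (n + 1) :=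
  ⟨Bw, Fw, Fw_Bw, Bw_Fw⟩

lemma card_ncpart_zero : Nat.card (NCPart 0) = 1 := by
  have h1 : ∀ π σ : NCPart 0, π = σ := by
    intro π σ
    exact Subtype.ext (eq_of_srel_iff fun x _ => x.elim0)
  have h2 : Nonempty (NCPart 0) := by
    refine ⟨⟨ofRel (fun _ _ => True) ⟨fun _ => trivial, fun _ => trivial, fun _ _ => trivial⟩, ?_⟩⟩
    rintro ⟨a, _, _, _, _, _, _⟩
    exact a.elim0
  haveI : Subsingleton (NCPart 0) := ⟨h1⟩
  haveI : Unique (NCPart 0) := uniqueOfSubsingleton h2.some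
  exact Nat.card_unique

lemma card_ncpart : ∀ n : ℕ, Nat.card (NCPart n) = catalan n := by
  intro n
  induction n using Nat.strong_induction_on with
  | _ n ih =>
    match n with
    | 0 => exact card_ncpart_zero.trans catalan_zero.symm
    | Nat.succ m =>
      classical
      letI : ∀ k : ℕ, Fintype (NCPart k) := fun k => Fintype.ofFinite _
      rw [← Nat.card_congr (ncpartEquiv m), catalan_succ]
      rw [Nat.card_eq_fintype_card, Fintype.card_sigma]
      apply Finset.sum_congr rfl
      intro i _
      rw [Fintype.card_prod]
      rw [← Nat.card_eq_fintype_card, ← Nat.card_eq_fintype_card]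
      rw [ih i.val i.isLt, ih (m - i.val) (by omega)]

end NCAux

/-- The number of non-crossing partitions of `{1,…,n}` is the `n`-th Catalan number, and
the Kreweras complement (the greatest non-crossing partition compatible with a given one
on the interleaved set) is an order-reversing bijection of `NC(n)`. -/
theorem ncpart_card_catalan_and_kreweras_antitone_bijection (n : ℕ) :
    Nat.card (NCPart n) = catalan n ∧
    (∀ π : NCPart n, IsGreatest {σ : NCPart n | KrewCompat π.1 σ.1} (kreweras π)) ∧
    Function.Bijective (kreweras (n := n)) ∧
    (∀ π σ : NCPart n, π ≤ σ → kreweras σ ≤ kreweras π) := by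
  refine ⟨NCAux.card_ncpart n, ?_, ?_, ?_⟩
  · intro π
    rw [NCAux.kreweras_eq_K1]
    exact NCAux.K1_greatest π
  · have h : kreweras (n := n) = NCAux.K1 := funext NCAux.kreweras_eq_K1
    rw [h]
    exact NCAux.K1_bijective
  · intro π σ h
    rw [NCAux.kreweras_eq_K1, NCAux.kreweras_eq_K1]
    exact NCAux.K1_antitone h
end

section
/- Let 𝔊¹(R) be the set of sequences (r₁, r₂, …) with r₁ ∈ R^× and rₙ ∈ R for n ≥ 2, identified with power series ∑ rₙ zⁿ, with multiplication given by boxed convolution ⊠ (coefficients X_w(f⊠g) = ∑_{π∈NC(|w|)} X_{w,π}(f)·X_{w,K(π)}(g)). Then 𝔊¹(R) is a group with identity z (the series with r₁ = 1, rₙ = 0 for n ≥ 2), and for s = 1 this group is abelian. -/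
open Finset

variable {R : Type*} [CommRing R]

/-- The boxed convolution in one variable:
`(f ⊠ g)ₙ = ∑_{π ∈ NC(n)} ∏_{V ∈ π} f_{|V|} · ∏_{W ∈ K(π)} g_{|W|}` (on series with zero
constant term, i.e. coefficients indexed by `n ≥ 1`). -/
noncomputable def boxConv (f g : PowerSeries R) : PowerSeries R :=
  PowerSeries.mk fun n =>
    if n = 0 then 0
    else ∑ᶠ π : NCPart n,
      (∏ V ∈ π.1.parts, PowerSeries.coeff V.card f) *
        ∏ W ∈ (kreweras π).1.parts, PowerSeries.coeff W.card g

/-- Membership in `𝔊¹(R)`: series `∑_{n≥1} rₙ zⁿ` with `r₁ ∈ R^×`. -/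
def memG1 (f : PowerSeries R) : Prop :=
  PowerSeries.constantCoeff f = 0 ∧ IsUnit (PowerSeries.coeff 1 f)

namespace BoxAux
open Finpartition

variable {n : ℕ}

abbrev FP (n : ℕ) := Finpartition (univ : Finset (Fin n))

lemma part_mem_univ (π : FP n) (x : Fin n) : π.part x ∈ π.parts :=
  π.part_mem.2 (mem_univ x)

lemma mem_part_univ (π : FP n) (x : Fin n) : x ∈ π.part x :=
  π.mem_part (mem_univ x)

lemma part_eq_iff {π : FP n} {x : Fin n} {B : Finset (Fin n)} (hB : B ∈ π.parts) :
    π.part x = B ↔ x ∈ B :=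
  ⟨fun h => h ▸ mem_part_univ π x, fun h => π.part_eq_of_mem hB h⟩

lemma part_eq_part_of_mem {π : FP n} {x y : Fin n} (h : y ∈ π.part x) :
    π.part y = π.part x :=
  π.part_eq_of_mem (part_mem_univ π x) h

/-- upgrade/downgrade for `IsNCFamily`. -/
lemma isNCFamily_iff {m : ℕ} (P : Finset (Finset (Fin m))) :
    IsNCFamily P ↔ ∀ (a b c d : Fin m) (B₁ B₂ : Finset (Fin m)),
      a < b → b < c → c < d → B₁ ∈ P → B₂ ∈ P → B₁ ≠ B₂ →
      a ∈ B₁ → c ∈ B₁ → b ∈ B₂ → d ∈ B₂ → False := by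
  unfold IsNCFamily
  push_neg
  constructor
  · intro h a b c d B₁ B₂ h1 h2 h3 hB1 hB2 hne ha hc hb hd
    rcases h a b c d B₁ B₂ with H
    tauto
  · intro h a b c d B₁ B₂
    intro h1 h2 h3 hB1 hB2 hne ha hc hb hd
    exact h a b c d B₁ B₂ h1 h2 h3 hB1 hB2 hne ha hc hb hd

/-- A subset is saturated for `π` : it is a union of parts. -/
def Sat (π : FP n) (s : Finset (Fin n)) : Prop :=
  ∀ ⦃x⦄, x ∈ s → π.part x ⊆ s

lemma Sat.union {π : FP n} {s t : Finset (Fin n)} (hs : Sat π s) (ht : Sat π t) :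
    Sat π (s ∪ t) := by
  intro x hx
  rcases mem_union.1 hx with h | h
  · exact (hs h).trans subset_union_left
  · exact (ht h).trans subset_union_right

lemma Sat.inter {π : FP n} {s t : Finset (Fin n)} (hs : Sat π s) (ht : Sat π t) :
    Sat π (s ∩ t) := by
  intro x hx
  rcases mem_inter.1 hx with ⟨h1, h2⟩
  exact subset_inter (hs h1) (ht h2)

lemma Sat.sdiff {π : FP n} {s t : Finset (Fin n)} (hs : Sat π s) (ht : Sat π t) :
    Sat π (s \ t) := by
  intro x hx
  rcases mem_sdiff.1 hx with ⟨h1, h2⟩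
  intro y hy
  rw [mem_sdiff]
  refine ⟨hs h1 hy, fun hyt => h2 ?_⟩
  have hpy : π.part y ⊆ t := ht hyt
  have hxy : x ∈ π.part y := by
    rw [part_eq_part_of_mem hy]; exact mem_part_univ π x
  exact hpy hxy

/-- The Kreweras relation: the half-open interval between `b` and `d` is saturated. -/
def Krel (π : FP n) (b d : Fin n) : Prop :=
  Sat π (Finset.Ioc (min b d) (max b d))

lemma Krel.refl (π : FP n) (b : Fin n) : Krel π b b := by
  intro x hx
  simp [min_self, max_self, Finset.Ioc_self] at hx

lemma Krel.symm {π : FP n} {b d : Fin n} (h : Krel π b d) : Krel π d b := by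
  unfold Krel at *
  rwa [min_comm, max_comm]

lemma krel_of_le {π : FP n} {b d : Fin n} (hbd : b ≤ d) (h : Sat π (Finset.Ioc b d)) :
    Krel π b d := by
  unfold Krel
  rwa [min_eq_left hbd, max_eq_right hbd]

lemma krel_sat {π : FP n} {b d : Fin n} (hbd : b ≤ d) (h : Krel π b d) :
    Sat π (Finset.Ioc b d) := by
  unfold Krel at h
  rwa [min_eq_left hbd, max_eq_right hbd] at h

lemma Ioc_split {b d e : Fin n} (h1 : b ≤ d) (h2 : d ≤ e) :
    Finset.Ioc b e = Finset.Ioc b d ∪ Finset.Ioc d e := by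
  ext x
  simp only [Finset.mem_Ioc, Finset.mem_union]
  constructor
  · rintro ⟨h3, h4⟩
    rcases le_or_gt x d with h | h
    · exact Or.inl ⟨h3, h⟩
    · exact Or.inr ⟨h, h4⟩
  · rintro (⟨h3, h4⟩ | ⟨h3, h4⟩)
    · exact ⟨h3, h4.trans h2⟩
    · exact ⟨h1.trans_lt h3, h4⟩

lemma Ioc_diff {b d e : Fin n} (h1 : b ≤ d) (h2 : d ≤ e) :
    Finset.Ioc b d = Finset.Ioc b e \ Finset.Ioc d e := by
  ext x
  simp only [Finset.mem_Ioc, Finset.mem_sdiff, not_and, not_le]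
  constructor
  · rintro ⟨h3, h4⟩
    exact ⟨⟨h3, h4.trans h2⟩, fun h5 => absurd h4 (not_le.2 h5)⟩
  · rintro ⟨⟨h3, h4⟩, h5⟩
    refine ⟨h3, ?_⟩
    by_contra h6
    exact absurd h4 (not_le.2 (h5 (not_le.1 h6)))

lemma Ioc_diff' {b d e : Fin n} (h1 : b ≤ d) (h2 : d ≤ e) :
    Finset.Ioc d e = Finset.Ioc b e \ Finset.Ioc b d := by
  ext x
  simp only [Finset.mem_Ioc, Finset.mem_sdiff, not_and, not_le]
  constructor
  · rintro ⟨h3, h4⟩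
    exact ⟨⟨h1.trans_lt h3, h4⟩, fun _ => h3⟩
  · rintro ⟨⟨h3, h4⟩, h5⟩
    refine ⟨?_, h4⟩
    by_contra h6
    exact absurd (h5 h3) (not_lt.2 (not_lt.1 h6))

lemma Krel.trans {π : FP n} {b d e : Fin n} (h1 : Krel π b d) (h2 : Krel π d e) :
    Krel π b e := by
  rcases le_total b d with hbd | hdb
  · rcases le_total d e with hde | hed
    · -- b ≤ d ≤ e
      refine krel_of_le (hbd.trans hde) ?_
      rw [Ioc_split hbd hde]
      exact (krel_sat hbd h1).union (krel_sat hde h2)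
    · rcases le_total b e with hbe | heb
      · -- b ≤ e ≤ d : Ioc b e = Ioc b d \ Ioc e d
        refine krel_of_le hbe ?_
        rw [Ioc_diff hbe hed]  -- Ioc b e = Ioc b d \ Ioc e d
        exact (krel_sat hbd h1).sdiff (krel_sat hed h2.symm)
      · -- e ≤ b ≤ d : Ioc e b = Ioc e d \ Ioc b d
        refine (krel_of_le heb ?_).symm
        rw [Ioc_diff heb hbd]
        exact (krel_sat hed h2.symm).sdiff (krel_sat hbd h1)
  · rcases le_total d e with hde | hed
    · rcases le_total b e with hbe | heb
      · -- d ≤ b ≤ e : Ioc b e = Ioc d e \ Ioc d b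
        refine krel_of_le hbe ?_
        have : Finset.Ioc b e = Finset.Ioc d e \ Finset.Ioc d b := by
          ext x
          simp only [Finset.mem_Ioc, Finset.mem_sdiff, not_and, not_le]
          constructor
          · rintro ⟨h3, h4⟩
            exact ⟨⟨hdb.trans_lt h3, h4⟩, fun _ => h3⟩
          · rintro ⟨⟨h3, h4⟩, h5⟩
            refine ⟨?_, h4⟩
            by_contra h6
            exact absurd (h5 h3) (not_lt.2 (not_lt.1 h6))
        rw [this]
        exact (krel_sat hde h2).sdiff (krel_sat hdb h1.symm)
      · -- d ≤ e ≤ b : Ioc e b = Ioc d b \ Ioc d e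
        refine (krel_of_le heb ?_).symm
        rw [Ioc_diff' hde heb]
        exact (krel_sat hdb h1.symm).sdiff (krel_sat hde h2)
    · -- e ≤ d, b ≤ ... : e ≤ d, d ≤ b : Ioc e b = Ioc e d ∪ Ioc d b
      refine (krel_of_le (hed.trans hdb) ?_).symm
      rw [Ioc_split hed hdb]
      exact (krel_sat hed h2.symm).union (krel_sat hdb h1.symm)

end BoxAux

namespace BoxAux

variable {n : ℕ}

/-- The Kreweras setoid. -/
def kSetoid (π : FP n) : Setoid (Fin n) :=
  ⟨Krel π, ⟨Krel.refl π, Krel.symm, Krel.trans⟩⟩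

open Classical in
noncomputable def kexp (π : FP n) : FP n :=
  @Finpartition.ofSetoid (Fin n) _ _ (kSetoid π) (Classical.decRel _)

lemma mem_part_kexp (π : FP n) {x y : Fin n} :
    y ∈ (kexp π).part x ↔ Krel π x y := by
  classical
  exact Finpartition.mem_part_ofSetoid_iff_rel

/- order facts about the interleaving embeddings -/
lemma evenEmb_lt_evenEmb {i j : Fin n} : evenEmb i < evenEmb j ↔ i < j := by
  simp only [evenEmb, Fin.lt_def]; omega

lemma oddEmb_lt_oddEmb {i j : Fin n} : oddEmb i < oddEmb j ↔ i < j := by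
  simp only [oddEmb, Fin.lt_def]; omega

lemma evenEmb_lt_oddEmb {i j : Fin n} : evenEmb i < oddEmb j ↔ i ≤ j := by
  simp only [evenEmb, oddEmb, Fin.lt_def, Fin.le_def]; omega

lemma oddEmb_lt_evenEmb {i j : Fin n} : oddEmb i < evenEmb j ↔ i < j := by
  simp only [evenEmb, oddEmb, Fin.lt_def]; omega

lemma evenEmb_injective : Function.Injective (evenEmb (n := n)) := by
  intro i j h
  simp only [evenEmb, Fin.mk.injEq] at h
  exact Fin.ext (by omega)

lemma oddEmb_injective : Function.Injective (oddEmb (n := n)) := by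
  intro i j h
  simp only [oddEmb, Fin.mk.injEq] at h
  exact Fin.ext (by omega)

lemma evenEmb_ne_oddEmb (i j : Fin n) : evenEmb i ≠ oddEmb j := by
  intro h
  simp only [evenEmb, oddEmb, Fin.mk.injEq] at h
  omega

lemma image_even_ne_image_odd {B W : Finset (Fin n)} (hB : B.Nonempty) :
    B.image evenEmb ≠ W.image oddEmb := by
  intro h
  obtain ⟨i, hi⟩ := hB
  have : evenEmb i ∈ W.image oddEmb := h ▸ mem_image_of_mem _ hi
  obtain ⟨j, _, hj⟩ := mem_image.1 this
  exact evenEmb_ne_oddEmb i j hj.symm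

lemma sat_of_compat {π σ : FP n}
    (hc : ∀ (a b c d : Fin (2 * n)) (B₁ B₂ : Finset (Fin (2 * n))),
      a < b → b < c → c < d →
      B₁ ∈ (π.parts.image fun B => B.image evenEmb) ∪
        (σ.parts.image fun B => B.image oddEmb) →
      B₂ ∈ (π.parts.image fun B => B.image evenEmb) ∪
        (σ.parts.image fun B => B.image oddEmb) →
      B₁ ≠ B₂ → a ∈ B₁ → c ∈ B₁ → b ∈ B₂ → d ∈ B₂ → False)
    {W : Finset (Fin n)} (hW : W ∈ σ.parts) {b d : Fin n}
    (hb : b ∈ W) (hd : d ∈ W) (hlt : b < d) : Sat π (Finset.Ioc b d) := by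
  intro x hx w hw
  by_contra hwIoc
  rw [Finset.mem_Ioc] at hx hwIoc
  push_neg at hwIoc
  have hBmem : π.part x ∈ π.parts := part_mem_univ π x
  rcases le_or_gt w b with hwb | hbw
  · exact hc (evenEmb w) (oddEmb b) (evenEmb x) (oddEmb d)
      ((π.part x).image evenEmb) (W.image oddEmb)
      (evenEmb_lt_oddEmb.2 hwb) (oddEmb_lt_evenEmb.2 hx.1) (evenEmb_lt_oddEmb.2 hx.2)
      (mem_union_left _ (mem_image_of_mem _ hBmem))
      (mem_union_right _ (mem_image_of_mem _ hW))
      (image_even_ne_image_odd ⟨x, mem_part_univ π x⟩)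
      (mem_image_of_mem _ hw) (mem_image_of_mem _ (mem_part_univ π x))
      (mem_image_of_mem _ hb) (mem_image_of_mem _ hd)
  · have hdw : d < w := hwIoc hbw
    exact hc (oddEmb b) (evenEmb x) (oddEmb d) (evenEmb w)
      (W.image oddEmb) ((π.part x).image evenEmb)
      (oddEmb_lt_evenEmb.2 hx.1) (evenEmb_lt_oddEmb.2 hx.2) (oddEmb_lt_evenEmb.2 hdw)
      (mem_union_right _ (mem_image_of_mem _ hW))
      (mem_union_left _ (mem_image_of_mem _ hBmem))
      (Ne.symm (image_even_ne_image_odd ⟨x, mem_part_univ π x⟩))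
      (mem_image_of_mem _ hb) (mem_image_of_mem _ hd)
      (mem_image_of_mem _ (mem_part_univ π x)) (mem_image_of_mem _ hw)

/-- The fundamental characterization of Kreweras compatibility. -/
lemma krewCompat_iff {π σ : FP n} (hπ : IsNCFamily π.parts) :
    KrewCompat π σ ↔ IsNCFamily σ.parts ∧
      ∀ W ∈ σ.parts, ∀ b ∈ W, ∀ d ∈ W, Krel π b d := by
  unfold KrewCompat
  constructor
  · intro hcompat
    have hc := (isNCFamily_iff _).1 hcompat
    constructor
    · rw [isNCFamily_iff]
      intro a b c d B₁ B₂ h1 h2 h3 hB1 hB2 hne ha hc' hb hd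
      exact hc (oddEmb a) (oddEmb b) (oddEmb c) (oddEmb d)
        (B₁.image oddEmb) (B₂.image oddEmb)
        (oddEmb_lt_oddEmb.2 h1) (oddEmb_lt_oddEmb.2 h2) (oddEmb_lt_oddEmb.2 h3)
        (mem_union_right _ (mem_image_of_mem _ hB1))
        (mem_union_right _ (mem_image_of_mem _ hB2))
        (fun h => hne (Finset.image_injective oddEmb_injective h))
        (mem_image_of_mem _ ha) (mem_image_of_mem _ hc')
        (mem_image_of_mem _ hb) (mem_image_of_mem _ hd)
    · intro W hW b hb d hd
      rcases lt_trichotomy b d with hlt | heq | hgt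
      · exact krel_of_le hlt.le (sat_of_compat hc hW hb hd hlt)
      · exact heq ▸ Krel.refl π b
      · exact (krel_of_le hgt.le (sat_of_compat hc hW hd hb hgt)).symm
  · rintro ⟨hσ, hrel⟩
    rw [isNCFamily_iff] at hπ hσ ⊢
    intro a b c d B₁ B₂ h1 h2 h3 hB1 hB2 hne ha hc' hb hd
    rcases mem_union.1 hB1 with h1m | h1m
    · obtain ⟨P, hP, rfl⟩ := mem_image.1 h1m
      obtain ⟨i, hi, rfl⟩ := mem_image.1 ha
      obtain ⟨j, hj, rfl⟩ := mem_image.1 hc'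
      rcases mem_union.1 hB2 with h2m | h2m
      · -- even, even
        obtain ⟨Q, hQ, rfl⟩ := mem_image.1 h2m
        obtain ⟨k, hk, rfl⟩ := mem_image.1 hb
        obtain ⟨l, hl, rfl⟩ := mem_image.1 hd
        exact hπ i k j l P Q (evenEmb_lt_evenEmb.1 h1) (evenEmb_lt_evenEmb.1 h2)
          (evenEmb_lt_evenEmb.1 h3) hP hQ (fun h => hne (by rw [h])) hi hj hk hl
      · -- even, odd
        obtain ⟨W, hW, rfl⟩ := mem_image.1 h2m
        obtain ⟨b', hb', rfl⟩ := mem_image.1 hb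
        obtain ⟨d', hd', rfl⟩ := mem_image.1 hd
        have e1 : i ≤ b' := evenEmb_lt_oddEmb.1 h1
        have e2 : b' < j := oddEmb_lt_evenEmb.1 h2
        have e3 : j ≤ d' := evenEmb_lt_oddEmb.1 h3
        have hkr : Sat π (Finset.Ioc b' d') :=
          krel_sat (e2.trans_le e3).le (hrel W hW b' hb' d' hd')
        have hPj : π.part j = P := π.part_eq_of_mem hP hj
        have : i ∈ Finset.Ioc b' d' := hkr (Finset.mem_Ioc.2 ⟨e2, e3⟩) (hPj ▸ hi)
        exact absurd (Finset.mem_Ioc.1 this).1 (not_lt.2 e1)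
    · obtain ⟨W, hW, rfl⟩ := mem_image.1 h1m
      obtain ⟨b', hb', rfl⟩ := mem_image.1 ha
      obtain ⟨d', hd', rfl⟩ := mem_image.1 hc'
      rcases mem_union.1 hB2 with h2m | h2m
      · -- odd, even
        obtain ⟨P, hP, rfl⟩ := mem_image.1 h2m
        obtain ⟨i, hi, rfl⟩ := mem_image.1 hb
        obtain ⟨j, hj, rfl⟩ := mem_image.1 hd
        have e1 : b' < i := oddEmb_lt_evenEmb.1 h1
        have e2 : i ≤ d' := evenEmb_lt_oddEmb.1 h2
        have e3 : d' < j := oddEmb_lt_evenEmb.1 h3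
        have hkr : Sat π (Finset.Ioc b' d') :=
          krel_sat (e1.trans_le e2).le (hrel W hW b' hb' d' hd')
        have hPi : π.part i = P := π.part_eq_of_mem hP hi
        have : j ∈ Finset.Ioc b' d' := hkr (Finset.mem_Ioc.2 ⟨e1, e2⟩) (hPi ▸ hj)
        exact absurd (Finset.mem_Ioc.1 this).2 (not_le.2 e3)
      · -- odd, odd
        obtain ⟨Q, hQ, rfl⟩ := mem_image.1 h2m
        obtain ⟨k, hk, rfl⟩ := mem_image.1 hb
        obtain ⟨l, hl, rfl⟩ := mem_image.1 hd
        exact hσ b' k d' l W Q (oddEmb_lt_oddEmb.1 h1) (oddEmb_lt_oddEmb.1 h2)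
          (oddEmb_lt_oddEmb.1 h3) hW hQ (fun h => hne (by rw [h])) hb' hd' hk hl

/-- The explicit Kreweras complement is noncrossing. -/
lemma kexp_NC (π : FP n) : IsNoncrossing (kexp π) := by
  rw [IsNoncrossing, isNCFamily_iff]
  intro a b c d B₁ B₂ h1 h2 h3 hB1 hB2 hne ha hc hb hd
  have hac : Krel π a c := by
    rw [← mem_part_kexp]
    rw [(kexp π).part_eq_of_mem hB1 ha]
    exact hc
  have hbd : Krel π b d := by
    rw [← mem_part_kexp]
    rw [(kexp π).part_eq_of_mem hB2 hb]
    exact hd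
  have hbc : Krel π b c := by
    refine krel_of_le h2.le ?_
    have : Finset.Ioc b c = Finset.Ioc a c ∩ Finset.Ioc b d := by
      ext x
      simp only [Finset.mem_Ioc, Finset.mem_inter]
      constructor
      · rintro ⟨u, v⟩
        exact ⟨⟨h1.trans u, v⟩, ⟨u, v.trans h3.le⟩⟩
      · rintro ⟨⟨_, v⟩, ⟨u, _⟩⟩
        exact ⟨u, v⟩
    rw [this]
    exact (krel_sat (h1.trans h2).le hac).inter (krel_sat (h2.trans h3).le hbd)
  have : c ∈ (kexp π).part b := (mem_part_kexp π).2 hbc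
  have hBB : B₂ = B₁ := by
    rw [← (kexp π).part_eq_of_mem hB2 hb, ← (kexp π).part_eq_of_mem hB1 hc]
    exact ((kexp π).part_eq_of_mem ((kexp π).part_mem.2 (mem_univ b)) this).symm
  exact hne hBB.symm

lemma krewCompat_kexp {π : FP n} (hπ : IsNCFamily π.parts) : KrewCompat π (kexp π) := by
  rw [krewCompat_iff hπ]
  refine ⟨kexp_NC π, fun W hW b hb d hd => ?_⟩
  rw [← mem_part_kexp]
  rw [(kexp π).part_eq_of_mem hW hb]
  exact hd

lemma le_kexp_of_compat {π σ : FP n} (hπ : IsNCFamily π.parts)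
    (h : KrewCompat π σ) : σ ≤ kexp π := by
  rw [krewCompat_iff hπ] at h
  intro W hW
  obtain ⟨b₀, hb₀⟩ := Finpartition.nonempty_of_mem_parts _ hW
  refine ⟨(kexp π).part b₀, (kexp π).part_mem.2 (mem_univ b₀), fun d hd => ?_⟩
  exact (mem_part_kexp π).2 (h.2 W hW b₀ hb₀ d hd)

lemma isGreatest_kexp (π : NCPart n) :
    IsGreatest {σ : NCPart n | KrewCompat π.1 σ.1} ⟨kexp π.1, kexp_NC π.1⟩ :=
  ⟨krewCompat_kexp π.2, fun σ hσ => le_kexp_of_compat π.2 hσ⟩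

lemma kreweras_eq (π : NCPart n) : kreweras π = ⟨kexp π.1, kexp_NC π.1⟩ := by
  unfold kreweras
  rw [dif_pos ⟨_, isGreatest_kexp π⟩]
  generalize_proofs h
  exact h.choose_spec.unique (isGreatest_kexp π)

lemma kreweras_val (π : NCPart n) : (kreweras π).1 = kexp π.1 := by
  rw [kreweras_eq]

/-- compat iff `≤` the complement -/
lemma krewCompat_iff_le {π σ : NCPart n} :
    KrewCompat π.1 σ.1 ↔ σ.1 ≤ kexp π.1 := by
  constructor
  · exact fun h => le_kexp_of_compat π.2 h
  · intro h
    rw [krewCompat_iff π.2]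
    refine ⟨σ.2, fun W hW b hb d hd => ?_⟩
    obtain ⟨C, hC, hWC⟩ := h hW
    have hCpart : C = (kexp π.1).part b := ((kexp π.1).part_eq_of_mem hC (hWC hb)).symm
    rw [← mem_part_kexp]
    rw [← hCpart]
    exact hWC hd

end BoxAux

namespace BoxAux

variable {n : ℕ}

lemma eq_of_n_zero (π ρ : FP 0) : π = ρ := by
  have h1 : π.parts = ∅ := Finpartition.parts_eq_empty_iff.2 (by simp)
  have h2 : ρ.parts = ∅ := Finpartition.parts_eq_empty_iff.2 (by simp)
  ext B
  rw [h1, h2]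

lemma part_bot (x : Fin n) : (⊥ : FP n).part x = {x} := by
  refine (⊥ : FP n).part_eq_of_mem ?_ (mem_singleton_self x)
  rw [Finpartition.parts_bot]
  exact mem_map_of_mem _ (mem_univ x)

lemma parts_eq_image_part (π : FP n) : π.parts = univ.image π.part := by
  ext B
  simp only [mem_image, mem_univ, true_and]
  constructor
  · intro hB
    obtain ⟨x, hx⟩ := Finpartition.nonempty_of_mem_parts _ hB
    exact ⟨x, π.part_eq_of_mem hB hx⟩
  · rintro ⟨x, rfl⟩
    exact part_mem_univ π x

lemma parts_top (hn : 0 < n) : (⊤ : FP n).parts = {(univ : Finset (Fin n))} := by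
  have hne : (univ : Finset (Fin n)).Nonempty := ⟨⟨0, hn⟩, mem_univ _⟩
  have h1 : (⊤ : FP n).parts ⊆ {univ} := Finpartition.parts_top_subset _
  have h2 : (⊤ : FP n).parts.Nonempty := by
    rw [Finpartition.parts_nonempty_iff]
    exact fun h => hne.ne_empty (by simpa using h)
  rcases Finset.subset_singleton_iff.1 h1 with h | h
  · exact absurd h h2.ne_empty
  · exact h

lemma part_top (hn : 0 < n) (x : Fin n) : (⊤ : FP n).part x = univ := by
  refine (⊤ : FP n).part_eq_of_mem ?_ (mem_univ x)
  rw [parts_top hn]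
  exact mem_singleton_self _

lemma bot_NC : IsNoncrossing (⊥ : FP n) := by
  rw [IsNoncrossing, isNCFamily_iff]
  intro a b c d B₁ B₂ h1 h2 h3 hB1 hB2 hne ha hc hb hd
  rw [Finpartition.mem_bot_iff] at hB1
  obtain ⟨x, _, rfl⟩ := hB1
  rw [mem_singleton] at ha hc
  exact absurd (ha.trans hc.symm) (h1.trans h2).ne

lemma top_NC : IsNoncrossing (⊤ : FP n) := by
  rw [IsNoncrossing, isNCFamily_iff]
  intro a b c d B₁ B₂ h1 h2 h3 hB1 hB2 hne ha hc hb hd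
  have s1 := Finpartition.parts_top_subset (univ : Finset (Fin n)) hB1
  have s2 := Finpartition.parts_top_subset (univ : Finset (Fin n)) hB2
  rw [mem_singleton] at s1 s2
  exact hne (s1.trans s2.symm)

lemma krel_bot (b d : Fin n) : Krel (⊥ : FP n) b d := by
  intro x hx
  rw [part_bot]
  simpa using hx

lemma kexp_bot : kexp (⊥ : FP n) = ⊤ := by
  rcases Nat.eq_zero_or_pos n with rfl | hn
  · exact eq_of_n_zero _ _
  ext B
  rw [parts_top hn, parts_eq_image_part, mem_singleton]
  have hpart : ∀ x : Fin n, (kexp (⊥ : FP n)).part x = univ := by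
    intro x
    ext y
    simp only [mem_univ, iff_true, mem_part_kexp]
    exact krel_bot x y
  constructor
  · intro hB
    obtain ⟨x, _, rfl⟩ := mem_image.1 hB
    exact hpart x
  · rintro rfl
    exact mem_image.2 ⟨⟨0, hn⟩, mem_univ _, hpart _⟩

lemma krel_top_iff (hn : 0 < n) {b d : Fin n} : Krel (⊤ : FP n) b d ↔ b = d := by
  constructor
  · intro h
    by_contra hbd
    have hlt : min b d < max b d := by
      rcases lt_or_gt_of_ne hbd with h' | h'
      · simpa [min_eq_left h'.le, max_eq_right h'.le] using h'
      · simpa [min_eq_right h'.le, max_eq_left h'.le] using h'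
    have hmem : max b d ∈ Finset.Ioc (min b d) (max b d) := Finset.mem_Ioc.2 ⟨hlt, le_refl _⟩
    have := h hmem
    rw [part_top hn] at this
    have h0 : (⟨0, hn⟩ : Fin n) ∈ Finset.Ioc (min b d) (max b d) := this (mem_univ _)
    have := (Finset.mem_Ioc.1 h0).1
    exact absurd this (by simp [Fin.lt_def])
  · rintro rfl
    exact Krel.refl _ b

lemma kexp_top : kexp (⊤ : FP n) = ⊥ := by
  rcases Nat.eq_zero_or_pos n with rfl | hn
  · exact eq_of_n_zero _ _
  ext B
  rw [Finpartition.parts_bot, parts_eq_image_part]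
  have hpart : ∀ x : Fin n, (kexp (⊤ : FP n)).part x = {x} := by
    intro x
    ext y
    simp only [mem_singleton, mem_part_kexp]
    rw [krel_top_iff hn]
    exact eq_comm
  constructor
  · intro hB
    obtain ⟨x, _, rfl⟩ := mem_image.1 hB
    rw [hpart x]
    exact mem_map_of_mem _ (mem_univ x)
  · intro hB
    obtain ⟨x, _, hx⟩ := mem_map.1 hB
    exact mem_image.2 ⟨x, mem_univ _, by rw [hpart x]; exact hx⟩

/-- number of parts equals number of elements that are maximal in their part -/
lemma card_parts_eq_card_maxrep (π : FP n) :
    #π.parts = #(univ.filter fun d : Fin n => ∀ y ∈ π.part d, y ≤ d) := by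
  classical
  refine Finset.card_bij (fun B hB => B.max' (π.nonempty_of_mem_parts hB)) ?_ ?_ ?_
  · intro B hB
    have hmem : B.max' (π.nonempty_of_mem_parts hB) ∈ B := B.max'_mem _
    rw [mem_filter]
    refine ⟨mem_univ _, fun y hy => ?_⟩
    rw [π.part_eq_of_mem hB hmem] at hy
    exact B.le_max' y hy
  · intro B₁ hB₁ B₂ hB₂ h
    beta_reduce at h
    have hau : B₁.max' (π.nonempty_of_mem_parts hB₁) ∈ B₂ := by
      rw [h]; exact B₂.max'_mem _
    exact π.eq_of_mem_parts hB₁ hB₂ (B₁.max'_mem _) hau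
  · intro d hd
    rw [mem_filter] at hd
    refine ⟨π.part d, part_mem_univ π d, ?_⟩
    have hne : (π.part d).Nonempty := ⟨d, mem_part_univ π d⟩
    have hmem : (π.part d).max' (π.nonempty_of_mem_parts (part_mem_univ π d)) ∈ π.part d :=
      Finset.max'_mem _ _
    exact le_antisymm (hd.2 _ hmem) (Finset.le_max' _ _ (mem_part_univ π d))

lemma card_parts_eq_card_minrep (π : FP n) :
    #π.parts = #(univ.filter fun d : Fin n => ∀ y ∈ π.part d, d ≤ y) := by
  classical
  refine Finset.card_bij (fun B hB => B.min' (π.nonempty_of_mem_parts hB)) ?_ ?_ ?_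
  · intro B hB
    have hmem : B.min' (π.nonempty_of_mem_parts hB) ∈ B := B.min'_mem _
    rw [mem_filter]
    refine ⟨mem_univ _, fun y hy => ?_⟩
    rw [π.part_eq_of_mem hB hmem] at hy
    exact B.min'_le y hy
  · intro B₁ hB₁ B₂ hB₂ h
    beta_reduce at h
    have hau : B₁.min' (π.nonempty_of_mem_parts hB₁) ∈ B₂ := by
      rw [h]; exact B₂.min'_mem _
    exact π.eq_of_mem_parts hB₁ hB₂ (B₁.min'_mem _) hau
  · intro d hd
    rw [mem_filter] at hd
    refine ⟨π.part d, part_mem_univ π d, ?_⟩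
    have hmem : (π.part d).min' (π.nonempty_of_mem_parts (part_mem_univ π d)) ∈ π.part d :=
      Finset.min'_mem _ _
    exact le_antisymm (Finset.min'_le _ _ (mem_part_univ π d)) (hd.2 _ hmem)

/-- the key nonmax characterization : `d` is not the max of its Kreweras class iff
`d+1` exists and is the minimum of its `π`-part. -/
lemma nonmax_char {π : FP n} (hπ : IsNoncrossing π) (d : Fin n) :
    (∃ e, d < e ∧ Krel π d e) ↔
      ∃ m : Fin n, d < m ∧ m.val = d.val + 1 ∧ ∀ y ∈ π.part m, m ≤ y := by
  constructor
  · rintro ⟨e, hde, hkrel⟩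
    have hm : d.val + 1 < n := by
      have := hde
      rw [Fin.lt_def] at this
      omega
    refine ⟨⟨d.val + 1, hm⟩, by simp [Fin.lt_def], rfl, ?_⟩
    set m : Fin n := ⟨d.val + 1, hm⟩
    have hsat := krel_sat hde.le hkrel
    have hmIoc : m ∈ Finset.Ioc d e := by
      rw [Finset.mem_Ioc]
      constructor
      · simp [Fin.lt_def, m]
      · rw [Fin.le_def]
        rw [Fin.lt_def] at hde
        simpa [m] using hde
    intro y hy
    have := hsat hmIoc hy
    rw [Finset.mem_Ioc] at this
    rw [Fin.le_def]
    rw [Fin.lt_def] at this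
    simp only [m]
    omega
  · rintro ⟨m, hdm, hmv, hmin⟩
    have hBne : (π.part m).Nonempty := ⟨m, mem_part_univ π m⟩
    set e := (π.part m).max' hBne with he
    have hme : m ≤ e := Finset.le_max' _ _ (mem_part_univ π m)
    have hde : d < e := lt_of_lt_of_le hdm hme
    refine ⟨e, hde, krel_of_le hde.le ?_⟩
    set B := π.part m with hB
    have heB : e ∈ B := Finset.max'_mem _ _
    -- saturation of Ioc d e
    intro x hx w hw
    rw [Finset.mem_Ioc] at hx
    by_contra hwn
    rw [Finset.mem_Ioc] at hwn
    push_neg at hwn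
    rcases eq_or_ne (π.part x) B with hDB | hDB
    · -- same block : w ∈ B so m ≤ w hence d < w, and w ≤ e
      rw [hDB] at hw
      have h1 : m ≤ w := hmin w hw
      have h2 : w ≤ e := Finset.le_max' _ _ hw
      exact absurd h2 (not_le.2 (hwn (lt_of_lt_of_le hdm h1)))
    · -- different block : crossing
      have hxB : x ∉ B := by
        intro hxB
        exact hDB (π.part_eq_of_mem (part_mem_univ π m) hxB ▸ rfl)
      have hmx : m ≤ x := by
        rw [Fin.le_def, hmv]
        have := hx.1
        rw [Fin.lt_def] at this
        omega
      have hxm : m < x :=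
        lt_of_le_of_ne hmx (fun h => hxB (h ▸ mem_part_univ π m))
      have hxe : x < e := lt_of_le_of_ne hx.2 (fun h => hxB (h ▸ heB))
      have hNC := (isNCFamily_iff π.parts).1 hπ
      rcases not_and_or.1 (fun hc : d < w ∧ w ≤ e => absurd hc.2 (not_le.2 (hwn hc.1)))
        with hwd | hwe
      · -- w ≤ d < m : pattern w < m < x < e with w,x ∈ D ; m,e ∈ B
        have hwm : w < m := lt_of_le_of_lt (not_lt.1 hwd) hdm
        exact hNC w m x e (π.part x) B hwm hxm hxe (part_mem_univ π x)
          (part_mem_univ π m) hDB hw (mem_part_univ π x) (mem_part_univ π m) heB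
      · -- e < w : pattern m < x < e < w with m,e ∈ B ; x,w ∈ D
        have hew : e < w := not_le.1 hwe
        exact hNC m x e w B (π.part x) hxm hxe hew (part_mem_univ π m)
          (part_mem_univ π x) (Ne.symm hDB) (mem_part_univ π m) heB
          (mem_part_univ π x) hw

/-- The fundamental counting identity : `|π| + |K(π)| = n + 1`. -/
lemma card_kexp (hn : 0 < n) {π : FP n} (hπ : IsNoncrossing π) :
    #π.parts + #(kexp π).parts = n + 1 := by
  classical
  -- nonmaxima of kexp π
  have hsplit : #(univ.filter fun d : Fin n => ∀ y ∈ (kexp π).part d, y ≤ d)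
      + #(univ.filter fun d : Fin n => ¬∀ y ∈ (kexp π).part d, y ≤ d) = n := by
    have := Finset.card_filter_add_card_filter_not
      (s := (univ : Finset (Fin n))) (p := fun d : Fin n => ∀ y ∈ (kexp π).part d, y ≤ d)
    rw [Finset.card_univ, Fintype.card_fin] at this
    simpa using this
  have hK := card_parts_eq_card_maxrep (kexp π)
  -- identify the nonmaxima set with the shifted minima set
  have hbij : #(univ.filter fun d : Fin n => ¬∀ y ∈ (kexp π).part d, y ≤ d)
      = #((univ.filter fun m : Fin n => 0 < m.val ∧ ∀ y ∈ π.part m, m ≤ y)) := by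
    have hsucc : ∀ d ∈ univ.filter (fun d : Fin n => ¬∀ y ∈ (kexp π).part d, y ≤ d),
        d.val + 1 < n := by
      intro d hd
      rw [mem_filter] at hd
      push_neg at hd
      obtain ⟨-, y, hy, hdy⟩ := hd
      rw [Fin.lt_def] at hdy
      have := y.isLt
      omega
    refine Finset.card_bij
      (fun d _ => if h : d.val + 1 < n then (⟨d.val + 1, h⟩ : Fin n) else d) ?_ ?_ ?_
    · intro d hd
      have hlt := hsucc d hd
      rw [mem_filter] at hd
      push_neg at hd
      obtain ⟨-, y, hy, hdy⟩ := hd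
      have hdd : ∃ e, d < e ∧ Krel π d e := ⟨y, hdy, (mem_part_kexp π).1 hy⟩
      rw [nonmax_char hπ] at hdd
      obtain ⟨m, hdm, hmv, hmin⟩ := hdd
      beta_reduce
      rw [dif_pos hlt, mem_filter]
      have hme : m = ⟨d.val + 1, hlt⟩ := Fin.ext (by rw [hmv])
      exact ⟨mem_univ _, Nat.succ_pos _, hme ▸ hmin⟩
    · intro d₁ h₁ d₂ h₂ h
      beta_reduce at h
      rw [dif_pos (hsucc d₁ h₁), dif_pos (hsucc d₂ h₂)] at h
      have := congrArg Fin.val h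
      simp only [Fin.val_mk] at this
      exact Fin.ext (by omega)
    · intro m hm
      rw [mem_filter] at hm
      obtain ⟨-, hm0, hmin⟩ := hm
      have hd : m.val - 1 < n := by have := m.isLt; omega
      have hdlt : (⟨m.val - 1, hd⟩ : Fin n).val + 1 < n := by
        simp only [Fin.val_mk]
        have := m.isLt
        omega
      refine ⟨⟨m.val - 1, hd⟩, ?_, ?_⟩
      · rw [mem_filter]
        refine ⟨mem_univ _, ?_⟩
        push_neg
        have : ∃ e, (⟨m.val - 1, hd⟩ : Fin n) < e ∧ Krel π ⟨m.val - 1, hd⟩ e := by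
          rw [nonmax_char hπ]
          refine ⟨m, ?_, ?_, hmin⟩
          · rw [Fin.lt_def]
            simp only [Fin.val_mk]
            omega
          · simp only [Fin.val_mk]
            omega
        obtain ⟨e, he, hkrel⟩ := this
        exact ⟨e, (mem_part_kexp π).2 hkrel, he⟩
      · beta_reduce
        rw [dif_pos hdlt]
        refine Fin.ext ?_
        simp only [Fin.val_mk]
        omega
  -- the shifted minima count is #π.parts - 1
  have hmins : #(univ.filter fun m : Fin n => 0 < m.val ∧ ∀ y ∈ π.part m, m ≤ y) + 1
      = #π.parts := by
    rw [card_parts_eq_card_minrep π]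
    have h0 : (⟨0, hn⟩ : Fin n) ∈ univ.filter fun d : Fin n => ∀ y ∈ π.part d, d ≤ y := by
      rw [mem_filter]
      exact ⟨mem_univ _, fun y _ => by rw [Fin.le_def]; exact Nat.zero_le _⟩
    have : (univ.filter fun m : Fin n => 0 < m.val ∧ ∀ y ∈ π.part m, m ≤ y)
        = (univ.filter fun d : Fin n => ∀ y ∈ π.part d, d ≤ y).erase ⟨0, hn⟩ := by
      ext m
      simp only [mem_filter, mem_erase, mem_univ, true_and]
      constructor
      · rintro ⟨h1, h2⟩
        exact ⟨fun h => by rw [h] at h1; simp at h1, h2⟩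
      · rintro ⟨h1, h2⟩
        refine ⟨?_, h2⟩
        rcases Nat.eq_zero_or_pos m.val with h | h
        · exact absurd (Fin.ext h : m = ⟨0, hn⟩) h1
        · exact h
    rw [this, Finset.card_erase_of_mem h0]
    have : 0 < #(univ.filter fun d : Fin n => ∀ y ∈ π.part d, d ≤ y) :=
      Finset.card_pos.2 ⟨_, h0⟩
    omega
  omega

end BoxAux

namespace BoxAux

variable {n : ℕ}

/-- rigidity : a refinement with no fewer parts is equal. -/
lemma eq_of_le_of_card_le {π ρ : FP n} (h : π ≤ ρ) (hc : #π.parts ≤ #ρ.parts) :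
    π = ρ := by
  classical
  have hcard : #ρ.parts = #π.parts := le_antisymm (Finpartition.card_mono h) hc
  set f : ∀ B ∈ π.parts, Finset (Fin n) :=
    fun B hB => ρ.part (B.min' (π.nonempty_of_mem_parts hB)) with hf
  have hmaps : ∀ B hB, f B hB ∈ ρ.parts := fun B hB => part_mem_univ ρ _
  have hsurj : ∀ C ∈ ρ.parts, ∃ B hB, f B hB = C := by
    intro C hC
    obtain ⟨B, hB, hBC⟩ := Finpartition.exists_le_of_le h hC
    exact ⟨B, hB, ρ.part_eq_of_mem hC (hBC (B.min'_mem _))⟩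
  have hinj := Finset.inj_on_of_surj_on_of_card_le f hmaps
    (fun C hC => by obtain ⟨B, hB, hBC⟩ := hsurj C hC; exact ⟨B, hB, hBC⟩)
    hc
  -- each part of π equals its image part
  have hkey : ∀ B (hB : B ∈ π.parts), B = f B hB := by
    intro B hB
    obtain ⟨C, hC, hBC⟩ := h hB
    have hfB : f B hB = C := ρ.part_eq_of_mem hC (hBC (B.min'_mem _))
    rw [hfB]
    refine Finset.Subset.antisymm hBC (fun x hx => ?_)
    have hx' : π.part x ∈ π.parts := part_mem_univ π x
    obtain ⟨D, hD, hxD⟩ := h hx'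
    have hD' : D = C := by
      refine ρ.eq_of_mem_parts hD hC (hxD (mem_part_univ π x)) hx
    have hfx : f (π.part x) hx' = C := by
      rw [hf]
      refine ρ.part_eq_of_mem hC ?_
      rw [← hD']
      exact hxD (Finset.min'_mem _ _)
    have := hinj hx' hB (by rw [hfx, hfB])
    rw [← this]
    exact mem_part_univ π x
  ext B
  constructor
  · intro hB
    rw [hkey B hB]
    exact hmaps B hB
  · intro hB
    obtain ⟨B', hB', hfB'⟩ := hsurj B hB
    rw [← hfB', ← hkey B' hB']
    exact hB'

/- ### reversal machinery -/

/-- The order-reversing relabeling of a partition. -/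
def finsetRevIso : Finset (Fin n) ≃o Finset (Fin n) where
  toEquiv := (Fin.revPerm (n := n)).finsetCongr
  map_rel_iff' := by
    intro s t
    exact Finset.map_subset_map

lemma finsetRevIso_apply (s : Finset (Fin n)) :
    finsetRevIso s = s.image Fin.rev := by
  simp [finsetRevIso, Equiv.finsetCongr_apply, Finset.map_eq_image]
  exact Finset.map_eq_image _ _

noncomputable def revP (π : FP n) : FP n :=
  (Finpartition.map finsetRevIso π).copy (by
    rw [finsetRevIso_apply]
    exact Finset.image_univ_of_surjective Fin.rev_surjective)

lemma parts_revP (π : FP n) :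
    (revP π).parts = π.parts.image (fun B => B.image Fin.rev) := by
  unfold revP
  rw [Finpartition.copy_parts, Finpartition.parts_map]
  rw [Finset.map_eq_image]
  refine Finset.image_congr ?_
  intro B _
  exact finsetRevIso_apply B

lemma mem_image_rev {B : Finset (Fin n)} {x : Fin n} :
    x ∈ B.image Fin.rev ↔ x.rev ∈ B := by
  rw [mem_image]
  constructor
  · rintro ⟨y, hy, rfl⟩
    rwa [Fin.rev_rev]
  · intro h
    exact ⟨x.rev, h, Fin.rev_rev x⟩

lemma image_rev_image_rev (B : Finset (Fin n)) :
    (B.image Fin.rev).image Fin.rev = B := by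
  ext x
  rw [mem_image_rev, mem_image_rev, Fin.rev_rev]

lemma revP_revP (π : FP n) : revP (revP π) = π := by
  ext B
  rw [parts_revP, parts_revP]
  constructor
  · intro hB
    obtain ⟨C, hC, rfl⟩ := mem_image.1 hB
    obtain ⟨D, hD, rfl⟩ := mem_image.1 hC
    rwa [image_rev_image_rev]
  · intro hB
    refine mem_image.2 ⟨B.image Fin.rev, mem_image.2 ⟨B, hB, rfl⟩, image_rev_image_rev B⟩

lemma card_parts_revP (π : FP n) : #(revP π).parts = #π.parts := by
  rw [parts_revP]
  refine Finset.card_image_of_injOn ?_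
  intro B _ C _ h
  have h' : B.image Fin.rev = C.image Fin.rev := h
  rw [← image_rev_image_rev B, h', image_rev_image_rev]

lemma revP_mono {π ρ : FP n} (h : π ≤ ρ) : revP π ≤ revP ρ := by
  intro B hB
  rw [parts_revP] at hB
  obtain ⟨C, hC, rfl⟩ := mem_image.1 hB
  obtain ⟨D, hD, hCD⟩ := h hC
  exact ⟨D.image Fin.rev, by rw [parts_revP]; exact mem_image_of_mem _ hD,
    Finset.image_subset_image hCD⟩

lemma revP_le_iff {π ρ : FP n} : revP π ≤ revP ρ ↔ π ≤ ρ := by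
  constructor
  · intro h
    have := revP_mono h
    rwa [revP_revP, revP_revP] at this
  · exact revP_mono

/-- reversal preserves noncrossing-ness of any family. -/
lemma isNCFamily_image_rev {m : ℕ} {P : Finset (Finset (Fin m))} (h : IsNCFamily P) :
    IsNCFamily (P.image (fun B => B.image Fin.rev)) := by
  rw [isNCFamily_iff] at h ⊢
  intro a b c d B₁ B₂ h1 h2 h3 hB1 hB2 hne ha hc hb hd
  obtain ⟨C₁, hC₁, rfl⟩ := mem_image.1 hB1
  obtain ⟨C₂, hC₂, rfl⟩ := mem_image.1 hB2
  rw [mem_image_rev] at ha hb hc hd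
  exact h d.rev c.rev b.rev a.rev C₂ C₁
    (Fin.rev_lt_rev.2 h3) (Fin.rev_lt_rev.2 h2) (Fin.rev_lt_rev.2 h1)
    hC₂ hC₁ (fun hEq => hne (by rw [hEq]))
    hd hb hc ha

lemma revP_NC {π : FP n} (h : IsNoncrossing π) : IsNoncrossing (revP π) := by
  rw [IsNoncrossing] at *
  rw [parts_revP]
  exact isNCFamily_image_rev h

/-- reversal on the doubled index set swaps the even and odd embeddings. -/
lemma rev_evenEmb (i : Fin n) : (evenEmb i).rev = oddEmb i.rev := by
  simp only [evenEmb, oddEmb, Fin.rev]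
  refine Fin.ext ?_
  simp only [Fin.val_mk]
  omega

lemma rev_oddEmb (i : Fin n) : (oddEmb i).rev = evenEmb i.rev := by
  simp only [evenEmb, oddEmb, Fin.rev]
  refine Fin.ext ?_
  simp only [Fin.val_mk]
  omega

/-- compatibility is symmetric up to reversal. -/
lemma image_even_rev (B : Finset (Fin n)) :
    (B.image Fin.rev).image evenEmb = (B.image oddEmb).image Fin.rev := by
  rw [Finset.image_image, Finset.image_image]
  refine Finset.image_congr ?_
  intro x _
  show evenEmb x.rev = (oddEmb x).rev
  rw [rev_oddEmb]

lemma image_odd_rev (B : Finset (Fin n)) :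
    (B.image Fin.rev).image oddEmb = (B.image evenEmb).image Fin.rev := by
  rw [Finset.image_image, Finset.image_image]
  refine Finset.image_congr ?_
  intro x _
  show oddEmb x.rev = (evenEmb x).rev
  rw [rev_evenEmb]

/-- compatibility is symmetric up to reversal. -/
lemma krewCompat_rev {π σ : FP n} (h : KrewCompat π σ) :
    KrewCompat (revP σ) (revP π) := by
  unfold KrewCompat at *
  have e1 : (revP σ).parts.image (fun B => B.image evenEmb)
      = (σ.parts.image fun B => B.image oddEmb).image (fun B => B.image Fin.rev) := by
    rw [parts_revP, Finset.image_image, Finset.image_image]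
    refine Finset.image_congr ?_
    intro B _
    exact image_even_rev B
  have e2 : (revP π).parts.image (fun B => B.image oddEmb)
      = (π.parts.image fun B => B.image evenEmb).image (fun B => B.image Fin.rev) := by
    rw [parts_revP, Finset.image_image, Finset.image_image]
    refine Finset.image_congr ?_
    intro B _
    exact image_odd_rev B
  have key : ((revP σ).parts.image fun B => B.image evenEmb) ∪
      ((revP π).parts.image fun B => B.image oddEmb)
      = ((π.parts.image fun B => B.image evenEmb) ∪
          (σ.parts.image fun B => B.image oddEmb)).image
        (fun B => B.image Fin.rev) := by
    rw [Finset.image_union, e1, e2, Finset.union_comm]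
  rw [key]
  exact isNCFamily_image_rev h

lemma krewCompat_rev_iff {π σ : FP n} :
    KrewCompat (revP σ) (revP π) ↔ KrewCompat π σ := by
  constructor
  · intro h
    have := krewCompat_rev h
    rwa [revP_revP, revP_revP] at this
  · exact krewCompat_rev

/- ### the complement as a bijection on `NCPart n` -/

/-- The Kreweras complement on `NCPart n` (explicit form). -/
noncomputable def Kn (π : NCPart n) : NCPart n := ⟨kexp π.1, kexp_NC π.1⟩

/-- The reversal on `NCPart n`. -/
noncomputable def Tn (π : NCPart n) : NCPart n := ⟨revP π.1, revP_NC π.2⟩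

lemma kreweras_eq_Kn (π : NCPart n) : kreweras π = Kn π := kreweras_eq π

lemma Tn_Tn (π : NCPart n) : Tn (Tn π) = π := Subtype.ext (revP_revP π.1)

lemma compat_iff_le_Kn {π σ : NCPart n} : KrewCompat π.1 σ.1 ↔ σ ≤ Kn π :=
  krewCompat_iff_le

lemma ncle_iff {π ρ : NCPart n} : π ≤ ρ ↔ π.1 ≤ ρ.1 := Iff.rfl

lemma Tn_le_iff {π ρ : NCPart n} : Tn π ≤ Tn ρ ↔ π ≤ ρ := by
  rw [ncle_iff, ncle_iff]
  show revP π.1 ≤ revP ρ.1 ↔ _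
  exact revP_le_iff

lemma le_Kn_iff_le_Kn' {π σ : NCPart n} : σ ≤ Kn π ↔ π ≤ Tn (Kn (Tn σ)) := by
  calc σ ≤ Kn π ↔ KrewCompat π.1 σ.1 := compat_iff_le_Kn.symm
    _ ↔ KrewCompat (revP σ.1) (revP π.1) := krewCompat_rev_iff.symm
    _ ↔ KrewCompat (Tn σ).1 (Tn π).1 := Iff.rfl
    _ ↔ Tn π ≤ Kn (Tn σ) := compat_iff_le_Kn
    _ ↔ Tn (Tn π) ≤ Tn (Kn (Tn σ)) := Tn_le_iff.symm
    _ ↔ π ≤ Tn (Kn (Tn σ)) := by rw [Tn_Tn]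

lemma card_Kn (hn : 0 < n) (π : NCPart n) :
    #π.1.parts + #(Kn π).1.parts = n + 1 := card_kexp hn π.2

lemma card_Tn (π : NCPart n) : #(Tn π).1.parts = #π.1.parts := card_parts_revP π.1

/-- `K` composed with its reverse-conjugate is the identity. -/
lemma TnKnTn_Kn (hn : 0 < n) (π : NCPart n) : Tn (Kn (Tn (Kn π))) = π := by
  have hle : π ≤ Tn (Kn (Tn (Kn π))) := le_Kn_iff_le_Kn'.1 (le_refl (Kn π))
  have hcard : #π.1.parts ≤ #(Tn (Kn (Tn (Kn π)))).1.parts := by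
    rw [card_Tn]
    have h1 := card_Kn hn (Tn (Kn π))
    rw [card_Tn] at h1
    have h2 := card_Kn hn π
    omega
  exact Subtype.ext (eq_of_le_of_card_le hle hcard).symm

instance : Finite (NCPart n) := by
  unfold NCPart
  infer_instance

lemma Kn_injective (hn : 0 < n) : Function.Injective (Kn (n := n)) := by
  intro π ρ h
  have := TnKnTn_Kn hn π
  rw [h, TnKnTn_Kn hn ρ] at this
  exact this.symm

lemma Kn_surjective (hn : 0 < n) : Function.Surjective (Kn (n := n)) :=
  Finite.surjective_of_injective (Kn_injective hn)

lemma Kn_TnKnTn (hn : 0 < n) (σ : NCPart n) : Kn (Tn (Kn (Tn σ))) = σ := by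
  obtain ⟨π, rfl⟩ := Kn_surjective hn σ
  rw [TnKnTn_Kn hn π]

end BoxAux

namespace BoxAux

variable {n : ℕ}

/- ### transport between a block `V` and `Fin V.card` -/

/-- the increasing enumeration of `V`. -/
noncomputable def emb (V : Finset (Fin n)) : Fin V.card → Fin n :=
  fun i => (V.orderIsoOfFin rfl i).1

lemma emb_mem (V : Finset (Fin n)) (i : Fin V.card) : emb V i ∈ V :=
  (V.orderIsoOfFin rfl i).2

lemma emb_lt_iff {V : Finset (Fin n)} {i j : Fin V.card} :
    emb V i < emb V j ↔ i < j := by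
  unfold emb
  rw [Subtype.coe_lt_coe]
  exact (V.orderIsoOfFin rfl).lt_iff_lt

lemma emb_le_iff {V : Finset (Fin n)} {i j : Fin V.card} :
    emb V i ≤ emb V j ↔ i ≤ j := by
  unfold emb
  rw [Subtype.coe_le_coe]
  exact (V.orderIsoOfFin rfl).le_iff_le

lemma emb_injective (V : Finset (Fin n)) : Function.Injective (emb V) := by
  intro i j h
  have := emb_le_iff.1 (le_of_eq h)
  have := emb_le_iff.1 (le_of_eq h.symm)
  omega

lemma emb_surj {V : Finset (Fin n)} {x : Fin n} (hx : x ∈ V) :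
    ∃ i, emb V i = x := by
  refine ⟨(V.orderIsoOfFin rfl).symm ⟨x, hx⟩, ?_⟩
  unfold emb
  rw [OrderIso.apply_symm_apply]

/-- pull a subset of `Fin n` back along the enumeration of `V`. -/
noncomputable def pull (V : Finset (Fin n)) (B : Finset (Fin n)) : Finset (Fin V.card) :=
  univ.filter (fun i => emb V i ∈ B)

lemma mem_pull {V B : Finset (Fin n)} {i : Fin V.card} :
    i ∈ pull V B ↔ emb V i ∈ B := by
  simp [pull]

lemma image_pull {V B : Finset (Fin n)} (hB : B ⊆ V) :
    (pull V B).image (emb V) = B := by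
  ext x
  rw [mem_image]
  constructor
  · rintro ⟨i, hi, rfl⟩
    exact mem_pull.1 hi
  · intro hx
    obtain ⟨i, rfl⟩ := emb_surj (hB hx)
    exact ⟨i, mem_pull.2 hx, rfl⟩

lemma pull_image {V : Finset (Fin n)} (A : Finset (Fin V.card)) :
    pull V (A.image (emb V)) = A := by
  ext i
  rw [mem_pull, mem_image]
  constructor
  · rintro ⟨j, hj, hji⟩
    rwa [emb_injective V hji] at hj
  · intro h
    exact ⟨i, h, rfl⟩

lemma card_image_emb {V : Finset (Fin n)} (A : Finset (Fin V.card)) :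
    #(A.image (emb V)) = #A :=
  Finset.card_image_of_injective _ (emb_injective V)

/-- lift a partition of `Fin V.card` to a `Finpartition` of `V`. -/
noncomputable def liftP (V : Finset (Fin n)) (s : FP V.card) :
    Finpartition (V : Finset (Fin n)) where
  parts := s.parts.image (fun A => A.image (emb V))
  supIndep := by
    rw [Finset.supIndep_iff_pairwiseDisjoint]
    intro B hB C hC hBC
    rw [Finset.mem_coe, mem_image] at hB hC
    obtain ⟨A₁, hA₁, rfl⟩ := hB
    obtain ⟨A₂, hA₂, rfl⟩ := hC
    have hA : A₁ ≠ A₂ := fun h => hBC (by rw [h])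
    have hdisj := s.disjoint hA₁ hA₂ hA
    simp only [Function.onFun, id] at hdisj ⊢
    rw [Finset.disjoint_left] at hdisj ⊢
    intro x hx₁ hx₂
    obtain ⟨i, hi, rfl⟩ := mem_image.1 hx₁
    obtain ⟨j, hj, hij⟩ := mem_image.1 hx₂
    rw [emb_injective V hij] at hj
    exact hdisj hi hj
  sup_parts := by
    ext x
    rw [Finset.mem_sup]
    constructor
    · rintro ⟨B, hB, hx⟩
      obtain ⟨A, hA, rfl⟩ := mem_image.1 hB
      obtain ⟨i, _, rfl⟩ := mem_image.1 hx
      exact emb_mem V i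
    · intro hx
      obtain ⟨i, rfl⟩ := emb_surj hx
      have : i ∈ (univ : Finset (Fin V.card)) := mem_univ i
      obtain ⟨A, hA, hiA⟩ := s.exists_mem this
      exact ⟨A.image (emb V), mem_image_of_mem _ hA, mem_image_of_mem _ hiA⟩
  bot_notMem := by
    intro h
    obtain ⟨A, hA, hAe⟩ := mem_image.1 h
    obtain ⟨i, hi⟩ := s.nonempty_of_mem_parts hA
    have : emb V i ∈ A.image (emb V) := mem_image_of_mem _ hi
    rw [hAe] at this
    exact absurd this (Finset.notMem_empty _)

lemma mem_liftP_parts {V : Finset (Fin n)} {s : FP V.card} {B : Finset (Fin n)} :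
    B ∈ (liftP V s).parts ↔ ∃ A ∈ s.parts, A.image (emb V) = B := by
  simp [liftP, mem_image]

/-- restrict a partition of `Fin n` to `V`, as a partition of `Fin V.card`. -/
noncomputable def restP (V : Finset (Fin n)) (σ : FP n) : FP V.card :=
  @Finpartition.ofSetoid (Fin V.card) _ _
    ⟨fun i j => σ.part (emb V i) = σ.part (emb V j),
      ⟨fun _ => rfl, fun h => h.symm, fun h₁ h₂ => h₁.trans h₂⟩⟩
    (Classical.decRel _)

lemma mem_part_restP {V : Finset (Fin n)} {σ : FP n} {i j : Fin V.card} :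
    j ∈ (restP V σ).part i ↔ σ.part (emb V i) = σ.part (emb V j) := by
  classical
  exact Finpartition.mem_part_ofSetoid_iff_rel

lemma part_restP (V : Finset (Fin n)) (σ : FP n) (i : Fin V.card) :
    (restP V σ).part i = pull V (σ.part (emb V i)) := by
  ext j
  rw [mem_part_restP, mem_pull]
  constructor
  · intro h
    rw [h]
    exact mem_part_univ σ _
  · intro h
    exact (part_eq_part_of_mem h).symm

lemma le_part {σ π : FP n} (h : σ ≤ π) (x : Fin n) : σ.part x ⊆ π.part x := by
  obtain ⟨C, hC, hsub⟩ := h (part_mem_univ σ x)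
  have : C = π.part x := (π.part_eq_of_mem hC (hsub (mem_part_univ σ x))).symm
  rwa [this] at hsub

/-- a partition of `univ` refining `π` equals the bind of its restrictions. -/
lemma part_bind {π : FP n} {Q : ∀ i ∈ π.parts, Finpartition i} {x : Fin n}
    {V : Finset (Fin n)} (hV : V ∈ π.parts) {B : Finset (Fin n)}
    (hB : B ∈ (Q V hV).parts) (hx : x ∈ B) : (π.bind Q).part x = B :=
  (π.bind Q).part_eq_of_mem (Finpartition.mem_bind.2 ⟨V, hV, hB⟩) hx

/-- extensionality via the `part` function. -/
lemma eq_of_part_eq {π ρ : FP n} (h : ∀ x, π.part x = ρ.part x) : π = ρ := by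
  ext B
  rw [parts_eq_image_part, parts_eq_image_part]
  exact Finset.mem_image.trans (by simp_rw [h]; exact Finset.mem_image.symm)

lemma eq_of_part_eq' {m : ℕ} {π ρ : FP m} (h : ∀ x, π.part x = ρ.part x) : π = ρ :=
  eq_of_part_eq h

/-- recovering `σ ≤ π` from its restrictions. -/
lemma bind_restP {σ π : FP n} (hσπ : σ ≤ π) :
    (π.bind fun V hV => liftP V (restP V σ)) = σ := by
  refine eq_of_part_eq fun x => ?_
  set V := π.part x with hV
  have hVmem : V ∈ π.parts := part_mem_univ π x
  obtain ⟨i₀, hi₀⟩ := emb_surj (mem_part_univ π x)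
  have hsub : σ.part x ⊆ V := le_part hσπ x
  have hBparts : (σ.part x) ∈ (liftP V (restP V σ)).parts := by
    rw [mem_liftP_parts]
    refine ⟨(restP V σ).part i₀, part_mem_univ _ _, ?_⟩
    rw [part_restP, hi₀, image_pull hsub]
  exact part_bind hVmem hBparts (mem_part_univ σ x)

/-- restriction of a bind gives back the local partition. -/
lemma restP_bind {π : FP n} (s : ∀ V ∈ π.parts, FP V.card)
    {V : Finset (Fin n)} (hV : V ∈ π.parts) :
    restP V (π.bind fun W hW => liftP W (s W hW)) = s V hV := by
  refine eq_of_part_eq' fun i => ?_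
  set SG := π.bind fun W hW => liftP W (s W hW) with hSG
  have hB : ((s V hV).part i).image (emb V) ∈ (liftP V (s V hV)).parts :=
    mem_liftP_parts.2 ⟨_, part_mem_univ _ _, rfl⟩
  have hxB : emb V i ∈ ((s V hV).part i).image (emb V) :=
    mem_image_of_mem _ (mem_part_univ _ i)
  have hpart : SG.part (emb V i) = ((s V hV).part i).image (emb V) :=
    part_bind hV hB hxB
  rw [part_restP, hpart, pull_image]

end BoxAux

namespace BoxAux

variable {n : ℕ} {π σ : FP n}

lemma part_inf (π ρ : FP n) (x : Fin n) :
    (π ⊓ ρ).part x = π.part x ∩ ρ.part x := by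
  refine (π ⊓ ρ).part_eq_of_mem ?_
    (mem_inter.2 ⟨mem_part_univ π x, mem_part_univ ρ x⟩)
  rw [Finpartition.parts_inf]
  refine Finset.mem_erase.2 ⟨?_, Finset.mem_image.2
    ⟨(π.part x, ρ.part x), Finset.mem_product.2 ⟨part_mem_univ π x, part_mem_univ ρ x⟩, ?_⟩⟩
  · intro h
    have : x ∈ π.part x ∩ ρ.part x :=
      mem_inter.2 ⟨mem_part_univ π x, mem_part_univ ρ x⟩
    rw [h] at this
    exact absurd this (Finset.notMem_empty x)
  · rfl

lemma restP_NC (hσ : IsNoncrossing σ) (V : Finset (Fin n)) :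
    IsNoncrossing (restP V σ) := by
  rw [IsNoncrossing, isNCFamily_iff] at hσ ⊢
  intro a b c d A₁ A₂ h1 h2 h3 hA1 hA2 hne ha hc hb hd
  have hac : σ.part (emb V a) = σ.part (emb V c) := by
    have h1' : (restP V σ).part a = A₁ := (restP V σ).part_eq_of_mem hA1 ha
    have := mem_part_restP.1 (h1' ▸ hc : c ∈ (restP V σ).part a)
    exact this
  have hbd : σ.part (emb V b) = σ.part (emb V d) := by
    have h2' : (restP V σ).part b = A₂ := (restP V σ).part_eq_of_mem hA2 hb
    exact mem_part_restP.1 (h2' ▸ hd : d ∈ (restP V σ).part b)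
  have hab : σ.part (emb V a) ≠ σ.part (emb V b) := by
    intro h
    have : b ∈ (restP V σ).part a := mem_part_restP.2 h
    have hA1' : (restP V σ).part a = A₁ := (restP V σ).part_eq_of_mem hA1 ha
    have hA2' : (restP V σ).part b = A₂ := (restP V σ).part_eq_of_mem hA2 hb
    rw [hA1'] at this
    exact hne (((restP V σ).part_eq_of_mem hA1 this).symm.trans hA2' ▸ rfl)
  exact hσ (emb V a) (emb V b) (emb V c) (emb V d)
    (σ.part (emb V a)) (σ.part (emb V b))
    (emb_lt_iff.2 h1) (emb_lt_iff.2 h2) (emb_lt_iff.2 h3)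
    (part_mem_univ σ _) (part_mem_univ σ _) hab
    (mem_part_univ σ _) (hac ▸ mem_part_univ σ (emb V c))
    (mem_part_univ σ _) (hbd ▸ mem_part_univ σ (emb V d))

lemma liftP_subset {V : Finset (Fin n)} {s : FP V.card} {B : Finset (Fin n)}
    (hB : B ∈ (liftP V s).parts) : B ⊆ V := by
  obtain ⟨A, _, rfl⟩ := mem_liftP_parts.1 hB
  intro x hx
  obtain ⟨i, _, rfl⟩ := mem_image.1 hx
  exact emb_mem V i

lemma bind_NC (hπ : IsNoncrossing π) (s : ∀ V ∈ π.parts, FP V.card)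
    (hs : ∀ V hV, IsNoncrossing (s V hV)) :
    IsNoncrossing (π.bind fun V hV => liftP V (s V hV)) := by
  rw [IsNoncrossing, isNCFamily_iff]
  intro a b c d B₁ B₂ h1 h2 h3 hB1 hB2 hne ha hc hb hd
  obtain ⟨V₁, hV₁, hB1'⟩ := Finpartition.mem_bind.1 hB1
  obtain ⟨V₂, hV₂, hB2'⟩ := Finpartition.mem_bind.1 hB2
  rcases eq_or_ne V₁ V₂ with rfl | hVne
  · -- same block : crossing inside s V₁
    obtain ⟨A₁, hA₁, rfl⟩ := mem_liftP_parts.1 hB1'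
    obtain ⟨A₂, hA₂, rfl⟩ := mem_liftP_parts.1 hB2'
    obtain ⟨ia, hia, rfl⟩ := mem_image.1 ha
    obtain ⟨ib, hib, rfl⟩ := mem_image.1 hb
    obtain ⟨ic, hic, rfl⟩ := mem_image.1 hc
    obtain ⟨id', hid, rfl⟩ := mem_image.1 hd
    have hAne : A₁ ≠ A₂ := fun h => hne (by rw [h])
    exact (isNCFamily_iff _).1 (hs V₁ hV₁) ia ib ic id' A₁ A₂
      (emb_lt_iff.1 h1) (emb_lt_iff.1 h2) (emb_lt_iff.1 h3)
      hA₁ hA₂ hAne hia hic hib hid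
  · -- different blocks : crossing in π
    exact (isNCFamily_iff _).1 hπ a b c d V₁ V₂ h1 h2 h3 hV₁ hV₂ hVne
      (liftP_subset hB1' ha) (liftP_subset hB1' hc)
      (liftP_subset hB2' hb) (liftP_subset hB2' hd)

/-- the local–global comparison of saturation (needs `π` noncrossing). -/
lemma krel_restP_iff (hπ : IsNoncrossing π) (hσπ : σ ≤ π)
    {V : Finset (Fin n)} (hV : V ∈ π.parts) (i j : Fin V.card) :
    Krel (restP V σ) i j ↔ Krel σ (emb V i) (emb V j) := by
  -- auxiliary : the ≤ case
  have aux : ∀ i j : Fin V.card, i ≤ j →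
      (Sat (restP V σ) (Finset.Ioc i j) ↔ Sat σ (Finset.Ioc (emb V i) (emb V j))) := by
    intro i j hij
    constructor
    · -- local to global
      intro lsat z hz w hw
      rw [Finset.mem_Ioc] at hz
      rcases eq_or_ne (π.part z) V with hzV | hzV
      · -- z inside V
        have hzV' : z ∈ V := hzV ▸ mem_part_univ π z
        obtain ⟨k, rfl⟩ := emb_surj hzV'
        have hwV : w ∈ V := by
          have : σ.part (emb V k) ⊆ π.part (emb V k) := le_part hσπ _
          exact (hzV ▸ this) hw
        obtain ⟨l, rfl⟩ := emb_surj hwV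
        have hkIoc : k ∈ Finset.Ioc i j :=
          Finset.mem_Ioc.2 ⟨emb_lt_iff.1 hz.1, emb_le_iff.1 hz.2⟩
        have hl : l ∈ (restP V σ).part k := by
          rw [part_restP, mem_pull]
          exact hw
        have := lsat hkIoc hl
        rw [Finset.mem_Ioc] at this
        exact Finset.mem_Ioc.2 ⟨emb_lt_iff.2 this.1, emb_le_iff.2 this.2⟩
      · -- z outside V : π-block of z is contained in the interval (noncrossing)
        have hNC := (isNCFamily_iff _).1 hπ
        have hπz : π.part z ⊆ Finset.Ioc (emb V i) (emb V j) := by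
          intro w' hw'
          by_contra hwn
          rw [Finset.mem_Ioc] at hwn
          push_neg at hwn
          have hzy : z < emb V j := by
            rcases lt_or_eq_of_le hz.2 with h | h
            · exact h
            · exact absurd (π.part_eq_of_mem hV (h ▸ emb_mem V j) : π.part z = V) hzV
          have hzx : emb V i < z := hz.1
          rcases le_or_gt w' (emb V i) with hw1 | hw1
          · -- w' ≤ x : pattern w' < x < z < y
            have hwx : w' < emb V i := by
              rcases lt_or_eq_of_le hw1 with h | h
              · exact h
              · exfalso
                refine hzV (π.eq_of_mem_parts (part_mem_univ π z) hV ?_ (emb_mem V i))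
                rw [← h] at *
                exact hw'
            exact hNC w' (emb V i) z (emb V j) (π.part z) V hwx hzx hzy
              (part_mem_univ π z) hV hzV hw' (mem_part_univ π z)
              (emb_mem V i) (emb_mem V j)
          · have hwy : emb V j < w' := hwn hw1
            exact hNC (emb V i) z (emb V j) w' V (π.part z) hzx hzy hwy
              hV (part_mem_univ π z) (Ne.symm hzV)
              (emb_mem V i) (emb_mem V j) (mem_part_univ π z) hw'
        exact (le_part hσπ z).trans hπz (hw)
    · -- global to local
      intro gsat k hk l hl
      rw [Finset.mem_Ioc] at hk
      have hkIoc : emb V k ∈ Finset.Ioc (emb V i) (emb V j) :=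
        Finset.mem_Ioc.2 ⟨emb_lt_iff.2 hk.1, emb_le_iff.2 hk.2⟩
      rw [part_restP, mem_pull] at hl
      have := gsat hkIoc hl
      rw [Finset.mem_Ioc] at this
      exact Finset.mem_Ioc.2 ⟨emb_lt_iff.1 this.1, emb_le_iff.1 this.2⟩
  rcases le_total i j with hij | hji
  · unfold Krel
    rw [min_eq_left hij, max_eq_right hij,
      min_eq_left (emb_le_iff.2 hij), max_eq_right (emb_le_iff.2 hij)]
    exact aux i j hij
  · unfold Krel
    rw [min_eq_right hji, max_eq_left hji,
      min_eq_right (emb_le_iff.2 hji), max_eq_left (emb_le_iff.2 hji)]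
    exact aux j i hji

/-- THE key structural result : glueing local Kreweras complements over the blocks of `π`
gives the meet `π ⊓ K(σ)`. -/
lemma bind_kexp_eq_meet (hπ : IsNoncrossing π) (hσπ : σ ≤ π) :
    (π.bind fun V hV => liftP V (kexp (restP V σ))) = π ⊓ kexp σ := by
  refine eq_of_part_eq fun x => ?_
  set V := π.part x with hVdef
  have hV : V ∈ π.parts := part_mem_univ π x
  obtain ⟨i₀, hi₀⟩ := emb_surj (mem_part_univ π x)
  have hB : ((kexp (restP V σ)).part i₀).image (emb V) ∈ (liftP V (kexp (restP V σ))).parts :=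
    mem_liftP_parts.2 ⟨_, part_mem_univ _ _, rfl⟩
  have hxB : x ∈ ((kexp (restP V σ)).part i₀).image (emb V) := by
    rw [← hi₀]
    exact mem_image_of_mem _ (mem_part_univ _ i₀)
  rw [part_bind hV hB hxB, part_inf]
  ext y
  rw [mem_image, mem_inter]
  constructor
  · rintro ⟨l, hl, rfl⟩
    refine ⟨emb_mem V l, ?_⟩
    have hkrel : Krel (restP V σ) i₀ l := (mem_part_kexp _).1 hl
    rw [krel_restP_iff hπ hσπ hV, hi₀] at hkrel
    exact (mem_part_kexp σ).2 hkrel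
  · rintro ⟨hyV, hyK⟩
    obtain ⟨l, rfl⟩ := emb_surj hyV
    have hkrel : Krel σ x (emb V l) := (mem_part_kexp σ).1 hyK
    rw [← hi₀] at hkrel
    rw [← krel_restP_iff hπ hσπ hV] at hkrel
    exact ⟨l, (mem_part_kexp _).2 hkrel, rfl⟩

lemma card_liftP_parts {V : Finset (Fin n)} (s : FP V.card) :
    #(liftP V s).parts = #s.parts := by
  show #(s.parts.image fun A => A.image (emb V)) = _
  refine Finset.card_image_of_injOn ?_
  intro A₁ _ A₂ _ h
  have h' : A₁.image (emb V) = A₂.image (emb V) := h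
  rw [← pull_image A₁, h', pull_image]

/-- relative counting : `|π ⊓ K(σ)| = |π| + n − |σ|` for `σ ≤ π` noncrossing. -/
lemma card_meet_kexp (hπ : IsNoncrossing π) (hσ : IsNoncrossing σ) (hσπ : σ ≤ π) :
    #(π ⊓ kexp σ).parts + #σ.parts = n + #π.parts := by
  classical
  rw [← bind_kexp_eq_meet hπ hσπ, Finpartition.card_bind]
  have hσc : #σ.parts = ∑ V ∈ π.parts.attach, #(restP V.1 σ).parts := by
    conv_lhs => rw [← bind_restP hσπ]
    rw [Finpartition.card_bind]
    exact Finset.sum_congr rfl fun V _ => card_liftP_parts _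
  rw [hσc]
  rw [← Finset.sum_add_distrib]
  have hterm : ∀ V ∈ π.parts.attach,
      #(liftP V.1 (kexp (restP V.1 σ))).parts + #(restP V.1 σ).parts = V.1.card + 1 := by
    intro V _
    rw [card_liftP_parts]
    have hpos : 0 < V.1.card :=
      Finset.card_pos.2 (π.nonempty_of_mem_parts V.2)
    have := card_kexp hpos (restP_NC hσ V.1)
    omega
  rw [Finset.sum_congr rfl hterm]
  rw [Finset.sum_add_distrib]
  have h1 : ∑ _x ∈ π.parts.attach, 1 = #π.parts := by simp
  have h2 : ∑ V ∈ π.parts.attach, #V.1 = n := by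
    rw [Finset.sum_attach π.parts (fun V => #V), Finpartition.sum_card_parts,
      Finset.card_univ, Fintype.card_fin]
  omega

end BoxAux

namespace BoxAux

variable {n : ℕ} {π σ : FP n}

lemma meet_NC (hπ : IsNoncrossing π) (hρ : IsNoncrossing σ) :
    IsNoncrossing (π ⊓ σ) := by
  rw [IsNoncrossing, isNCFamily_iff]
  intro a b c d M₁ M₂ h1 h2 h3 hM1 hM2 hne ha hc hb hd
  have hM1' : M₁ = (π ⊓ σ).part a := ((π ⊓ σ).part_eq_of_mem hM1 ha).symm
  have hM2' : M₂ = (π ⊓ σ).part b := ((π ⊓ σ).part_eq_of_mem hM2 hb).symm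
  rw [hM1', part_inf] at ha hc
  rw [hM2', part_inf] at hb hd
  have hπac := (mem_inter.1 hc).1
  have hσac := (mem_inter.1 hc).2
  have hπbd := (mem_inter.1 hd).1
  have hσbd := (mem_inter.1 hd).2
  rcases eq_or_ne (π.part a) (π.part b) with hab | hab
  · -- then the σ-parts must differ
    have hσab : σ.part a ≠ σ.part b := by
      intro h
      apply hne
      rw [hM1', hM2', part_inf, part_inf, hab, h]
    exact (isNCFamily_iff _).1 hρ a b c d (σ.part a) (σ.part b) h1 h2 h3
      (part_mem_univ σ a) (part_mem_univ σ b) hσab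
      (mem_part_univ σ a) hσac (mem_part_univ σ b) hσbd
  · exact (isNCFamily_iff _).1 hπ a b c d (π.part a) (π.part b) h1 h2 h3
      (part_mem_univ π a) (part_mem_univ π b) hab
      (mem_part_univ π a) hπac (mem_part_univ π b) hπbd

lemma krel_mono (hσπ : σ ≤ π) {x y : Fin n} (h : Krel π x y) : Krel σ x y := by
  intro z hz
  exact (le_part hσπ z).trans (h hz)

lemma kexp_anti (hσπ : σ ≤ π) : kexp π ≤ kexp σ := by
  intro B hB
  obtain ⟨b₀, hb₀⟩ := (kexp π).nonempty_of_mem_parts hB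
  refine ⟨(kexp σ).part b₀, part_mem_univ _ _, fun y hy => ?_⟩
  have : Krel π b₀ y := by
    rw [← mem_part_kexp]
    rw [(kexp π).part_eq_of_mem hB hb₀]
    exact hy
  exact (mem_part_kexp σ).2 (krel_mono hσπ this)

/-- (B′) : the complement of `π` in terms of `σ ≤ π`. -/
lemma kexp_of_meet (hπ : IsNoncrossing π) (hσ : IsNoncrossing σ) (hσπ : σ ≤ π) :
    kexp π = kexp σ ⊓ kexp (π ⊓ kexp σ) := by
  rcases Nat.eq_zero_or_pos n with rfl | hn
  · exact eq_of_n_zero _ _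
  have hτNC : IsNoncrossing (π ⊓ kexp σ) := meet_NC hπ (kexp_NC σ)
  have hle : kexp π ≤ kexp σ ⊓ kexp (π ⊓ kexp σ) :=
    le_inf (kexp_anti hσπ) (kexp_anti inf_le_left)
  have c1 : #(π ⊓ kexp σ).parts + #σ.parts = n + #π.parts := card_meet_kexp hπ hσ hσπ
  have c2 := card_meet_kexp (kexp_NC σ) hτNC
    (inf_le_right : π ⊓ kexp σ ≤ kexp σ)
  have c3 := card_kexp hn hπ
  have c4 := card_kexp hn hσ
  refine eq_of_le_of_card_le hle (le_of_eq ?_)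
  omega

/-- injectivity of `kexp` on noncrossing partitions. -/
lemma kexp_inj (hn : 0 < n) (hπ : IsNoncrossing π) (hσ : IsNoncrossing σ)
    (h : kexp π = kexp σ) : π = σ := by
  have := Kn_injective hn (show Kn ⟨π, hπ⟩ = Kn ⟨σ, hσ⟩ from Subtype.ext h)
  exact congrArg Subtype.val this

/-- injectivity of the relative complement map `τ ↦ ρ ⊓ K(τ)` on `[⊥, ρ]`. -/
lemma meet_kexp_inj {ρ τ₁ τ₂ : FP n} (hρ : IsNoncrossing ρ)
    (h₁ : IsNoncrossing τ₁) (h₂ : IsNoncrossing τ₂)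
    (hτ₁ : τ₁ ≤ ρ) (hτ₂ : τ₂ ≤ ρ)
    (h : ρ ⊓ kexp τ₁ = ρ ⊓ kexp τ₂) : τ₁ = τ₂ := by
  have key : ∀ V (hV : V ∈ ρ.parts), restP V τ₁ = restP V τ₂ := by
    intro V hV
    have e₁ : restP V (ρ ⊓ kexp τ₁) = kexp (restP V τ₁) := by
      rw [← bind_kexp_eq_meet hρ hτ₁]
      exact restP_bind (fun W hW => kexp (restP W τ₁)) hV
    have e₂ : restP V (ρ ⊓ kexp τ₂) = kexp (restP V τ₂) := by
      rw [← bind_kexp_eq_meet hρ hτ₂]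
      exact restP_bind (fun W hW => kexp (restP W τ₂)) hV
    have : kexp (restP V τ₁) = kexp (restP V τ₂) := by
      rw [← e₁, ← e₂, h]
    have hpos : 0 < V.card := Finset.card_pos.2 (ρ.nonempty_of_mem_parts hV)
    exact kexp_inj hpos (restP_NC h₁ V) (restP_NC h₂ V) this
  have e : (fun V (hV : V ∈ ρ.parts) => liftP V (restP V τ₁))
      = fun V hV => liftP V (restP V τ₂) := by
    funext V hV
    rw [key V hV]
  calc τ₁ = ρ.bind fun V hV => liftP V (restP V τ₁) := (bind_restP hτ₁).symm
    _ = ρ.bind fun V hV => liftP V (restP V τ₂) := by rw [e]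
    _ = τ₂ := bind_restP hτ₂

/- ### NCPart-level packaging of the interval bijection -/

noncomputable instance : Fintype (NCPart n) := Fintype.ofFinite _

/-- the meet on `NCPart`. -/
noncomputable def ncMeet (π ρ : NCPart n) : NCPart n :=
  ⟨π.1 ⊓ ρ.1, meet_NC π.2 ρ.2⟩

/-- the inverse Kreweras complement. -/
noncomputable def Kninv (σ : NCPart n) : NCPart n := Tn (Kn (Tn σ))

lemma Kninv_Kn (hn : 0 < n) (π : NCPart n) : Kninv (Kn π) = π := TnKnTn_Kn hn π

lemma Kn_Kninv (hn : 0 < n) (σ : NCPart n) : Kn (Kninv σ) = σ := Kn_TnKnTn hn σ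

/-- forward map of the interval bijection. -/
noncomputable def fwdI (σ π : NCPart n) : NCPart n := ncMeet π (Kn σ)

/-- backward map of the interval bijection. -/
noncomputable def bwdI (σ τ : NCPart n) : NCPart n := Kninv (ncMeet (Kn σ) (Kn τ))

lemma fwdI_le (σ π : NCPart n) : fwdI σ π ≤ Kn σ := by
  rw [ncle_iff]
  show π.1 ⊓ (Kn σ).1 ≤ (Kn σ).1
  exact inf_le_right

lemma kexp_of_meet' (σ π : NCPart n) (h : σ ≤ π) :
    Kn π = ncMeet (Kn σ) (Kn (fwdI σ π)) :=
  Subtype.ext (kexp_of_meet π.2 σ.2 h)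

lemma bwdI_fwdI (hn : 0 < n) (σ π : NCPart n) (h : σ ≤ π) :
    bwdI σ (fwdI σ π) = π := by
  unfold bwdI
  rw [← kexp_of_meet' σ π h, Kninv_Kn hn]

lemma le_bwdI (hn : 0 < n) (σ τ : NCPart n) (h : τ ≤ Kn σ) : σ ≤ bwdI σ τ := by
  unfold bwdI Kninv
  rw [← le_Kn_iff_le_Kn', ncle_iff]
  exact inf_le_left

lemma fwdI_bwdI (hn : 0 < n) (σ τ : NCPart n) (h : τ ≤ Kn σ) :
    fwdI σ (bwdI σ τ) = τ := by
  have hσle : σ ≤ bwdI σ τ := le_bwdI hn σ τ h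
  have hK : Kn (bwdI σ τ) = ncMeet (Kn σ) (Kn τ) := Kn_Kninv hn _
  have hB := kexp_of_meet' σ (bwdI σ τ) hσle
  rw [hK] at hB
  -- hB : ncMeet (Kn σ) (Kn τ) = ncMeet (Kn σ) (Kn (fwdI σ (bwdI σ τ)))
  refine Subtype.ext ?_
  refine meet_kexp_inj (Kn σ).2 (fwdI σ (bwdI σ τ)).2 τ.2
    (fwdI_le σ (bwdI σ τ)) h ?_
  have := congrArg Subtype.val hB
  exact (congrArg Subtype.val hB).symm

end BoxAux

namespace BoxAux

variable {n : ℕ}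

lemma prod_parts_bind {M : Type*} [CommMonoid M] (π : FP n)
    (Q : ∀ V ∈ π.parts, Finpartition V) (f : Finset (Fin n) → M) :
    ∏ B ∈ (π.bind Q).parts, f B = ∏ V ∈ π.parts.attach, ∏ B ∈ (Q V.1 V.2).parts, f B := by
  classical
  show ∏ B ∈ π.parts.attach.biUnion _, f B = _
  refine Finset.prod_biUnion ?_
  intro V hV W hW hVW
  simp only [Function.onFun]
  rw [Finset.disjoint_left]
  intro B hBV hBW
  refine (Q V.1 V.2).ne_bot hBV ?_
  have h1 : B ≤ V.1 := (Q V.1 V.2).le hBV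
  have h2 : B ≤ W.1 := (Q W.1 W.2).le hBW
  have hd := π.disjoint V.2 W.2 (fun h => hVW (Subtype.ext h))
  exact eq_bot_iff.2 ((le_inf h1 h2).trans hd.le_bot)

lemma prod_parts_liftP {M : Type*} [CommMonoid M] {V : Finset (Fin n)} (s : FP V.card)
    (f : ℕ → M) :
    ∏ B ∈ (liftP V s).parts, f #B = ∏ A ∈ s.parts, f #A := by
  show ∏ B ∈ s.parts.image (fun A => A.image (emb V)), f #B = _
  rw [Finset.prod_image]
  · exact Finset.prod_congr rfl fun A _ => by rw [card_image_emb]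
  · intro A₁ _ A₂ _ h
    rw [← pull_image A₁, show A₁.image (emb V) = A₂.image (emb V) from h, pull_image]

lemma bind_le (π : FP n) (Q : ∀ V ∈ π.parts, Finpartition V) : π.bind Q ≤ π := by
  intro B hB
  obtain ⟨V, hV, hB'⟩ := Finpartition.mem_bind.1 hB
  exact ⟨V, hV, (Q V hV).le hB'⟩

open Classical in
/-- The KEY expansion lemma : a product over the blocks of `π` of full boxed-convolution
sums equals a sum over refinements `σ ≤ π`. -/
lemma key_expand (π : NCPart n) (u v : ℕ → R) :
    ∏ V ∈ π.1.parts, (∑ s : NCPart V.card,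
        (∏ A ∈ s.1.parts, u #A) * ∏ A ∈ (kexp s.1).parts, v #A)
    = ∑ σ ∈ univ.filter (fun σ : NCPart n => σ.1 ≤ π.1),
        (∏ A ∈ σ.1.parts, u #A) * ∏ A ∈ (π.1 ⊓ kexp σ.1).parts, v #A := by
  classical
  rw [Finset.prod_sum π.1.parts (fun V => (univ : Finset (NCPart V.card)))
    (fun V s => (∏ A ∈ s.1.parts, u #A) * ∏ A ∈ (kexp s.1).parts, v #A)]
  refine Finset.sum_nbij'
    (i := fun p => (⟨π.1.bind fun V hV => liftP V (p V hV).1,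
      bind_NC π.2 _ (fun V hV => (p V hV).2)⟩ : NCPart n))
    (j := fun σ => fun V hV => (⟨restP V σ.1, restP_NC σ.2 V⟩ : NCPart V.card))
    ?_ ?_ ?_ ?_ ?_
  · -- maps into filter
    intro p hp
    rw [mem_filter]
    exact ⟨mem_univ _, bind_le _ _⟩
  · -- j maps into pi
    intro σ hσ
    exact Finset.mem_pi.2 fun V hV => mem_univ _
  · -- left inverse
    intro p hp
    funext V hV
    refine Subtype.ext ?_
    show restP V (π.1.bind fun W hW => liftP W (p W hW).1) = (p V hV).1
    exact restP_bind (fun W hW => (p W hW).1) hV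
  · -- right inverse
    intro σ hσ
    rw [mem_filter] at hσ
    refine Subtype.ext ?_
    show (π.1.bind fun V hV => liftP V (restP V σ.1)) = σ.1
    exact bind_restP hσ.2
  · -- values agree
    intro p hp
    rw [Finset.prod_mul_distrib]
    congr 1
    · -- u-product
      rw [show ((⟨π.1.bind fun V hV => liftP V (p V hV).1, _⟩ : NCPart n)).1
          = π.1.bind fun V hV => liftP V (p V hV).1 from rfl]
      rw [prod_parts_bind]
      exact Finset.prod_congr rfl fun V _ => (prod_parts_liftP _ _).symm
    · -- v-product
      have hle : (π.1.bind fun V hV => liftP V (p V hV).1) ≤ π.1 := bind_le _ _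
      have hmeet : π.1 ⊓ kexp (π.1.bind fun V hV => liftP V (p V hV).1)
          = π.1.bind fun V hV =>
              liftP V (kexp (restP V (π.1.bind fun W hW => liftP W (p W hW).1))) :=
        (bind_kexp_eq_meet π.2 hle).symm
      have hfun : (fun V (hV : V ∈ π.1.parts) =>
            liftP V (kexp (restP V (π.1.bind fun W hW => liftP W (p W hW).1))))
          = fun V hV => liftP V (kexp (p V hV).1) := by
        funext V hV
        rw [restP_bind (fun W hW => (p W hW).1) hV]
      rw [show ((⟨π.1.bind fun V hV => liftP V (p V hV).1, _⟩ : NCPart n)).1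
          = π.1.bind fun V hV => liftP V (p V hV).1 from rfl]
      rw [hmeet, hfun, prod_parts_bind]
      exact Finset.prod_congr rfl fun V _ => (prod_parts_liftP _ _).symm

end BoxAux

namespace BoxAux

variable {n : ℕ}

open PowerSeries

lemma coeff_boxConv (f g : PowerSeries R) {m : ℕ} (hm : m ≠ 0) :
    PowerSeries.coeff m (boxConv f g) = ∑ π : NCPart m,
      (∏ V ∈ π.1.parts, PowerSeries.coeff #V f) *
        ∏ W ∈ (kexp π.1).parts, PowerSeries.coeff #W g := by
  unfold boxConv
  rw [PowerSeries.coeff_mk, if_neg hm, finsum_eq_sum_of_fintype]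
  refine Finset.sum_congr rfl fun π _ => ?_
  rw [kreweras_val]

lemma constantCoeff_boxConv (f g : PowerSeries R) :
    PowerSeries.constantCoeff (boxConv f g) = 0 := by
  rw [← PowerSeries.coeff_zero_eq_constantCoeff]
  unfold boxConv
  rw [PowerSeries.coeff_mk, if_pos rfl]

/- facts about tiny partitions -/
lemma fp_one_parts (π : FP 1) : π.parts = {({0} : Finset (Fin 1))} := by
  have h0 : π.part 0 = {0} := by
    refine Finset.Subset.antisymm ?_ ?_
    · intro x _
      rw [Finset.mem_singleton]
      exact Subsingleton.elim x 0
    · intro x hx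
      rw [Finset.mem_singleton] at hx
      subst hx
      exact mem_part_univ π 0
  rw [parts_eq_image_part]
  ext B
  rw [Finset.mem_image, Finset.mem_singleton]
  constructor
  · rintro ⟨x, _, rfl⟩
    rw [Subsingleton.elim x 0, h0]
  · rintro rfl
    exact ⟨0, mem_univ _, h0⟩

lemma ncpart_one_eq (π ρ : NCPart 1) : π = ρ := by
  refine Subtype.ext ?_
  ext B
  rw [fp_one_parts, fp_one_parts]

lemma sum_ncpart_one (F : NCPart 1 → R) :
    ∑ π : NCPart 1, F π = F ⟨⊥, bot_NC⟩ := by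
  have : (univ : Finset (NCPart 1)) = {⟨⊥, bot_NC⟩} := by
    refine Finset.eq_singleton_iff_unique_mem.2 ⟨mem_univ _, fun y _ => ?_⟩
    exact ncpart_one_eq y _
  rw [this, Finset.sum_singleton]

lemma coeff_one_boxConv (f g : PowerSeries R) :
    PowerSeries.coeff 1 (boxConv f g) =
      PowerSeries.coeff 1 f * PowerSeries.coeff 1 g := by
  rw [coeff_boxConv f g one_ne_zero, sum_ncpart_one]
  have h1 : ((⟨⊥, bot_NC⟩ : NCPart 1).1).parts = {({0} : Finset (Fin 1))} := fp_one_parts _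
  have h2 : (kexp (⟨⊥, bot_NC⟩ : NCPart 1).1).parts = {({0} : Finset (Fin 1))} :=
    fp_one_parts _
  rw [h1, h2, Finset.prod_singleton, Finset.prod_singleton]
  norm_num

/-- all parts singletons → ⊥ -/
lemma eq_bot_of_parts_card_one {π : FP n} (h : ∀ V ∈ π.parts, #V = 1) : π = ⊥ := by
  refine eq_of_part_eq fun x => ?_
  rw [part_bot]
  have hc := h _ (part_mem_univ π x)
  obtain ⟨a, ha⟩ := Finset.card_eq_one.1 hc
  have hx := mem_part_univ π x
  rw [ha] at hx ⊢
  rw [Finset.mem_singleton] at hx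
  rw [hx]

/-- a part of full size forces ⊤ -/
lemma eq_top_of_univ_mem {π : FP n} (h : (univ : Finset (Fin n)) ∈ π.parts) : π = ⊤ := by
  rcases Nat.eq_zero_or_pos n with rfl | hn
  · exact eq_of_n_zero _ _
  ext B
  rw [parts_top hn, Finset.mem_singleton]
  constructor
  · intro hB
    obtain ⟨x, hx⟩ := π.nonempty_of_mem_parts hB
    exact π.eq_of_mem_parts hB h hx (mem_univ x)
  · rintro rfl
    exact h

lemma eq_top_of_card_parts_one {π : FP n} (hn : 0 < n) (h : #π.parts = 1) : π = ⊤ := by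
  obtain ⟨B, hB⟩ := Finset.card_eq_one.1 h
  have hBuniv : B = univ := by
    have := π.sup_parts
    rw [hB, Finset.sup_singleton] at this
    exact this
  have hmem : B ∈ π.parts := by rw [hB]; exact Finset.mem_singleton_self B
  rw [hBuniv] at hmem
  exact eq_top_of_univ_mem hmem

lemma kexp_ne_bot {π : FP n} (hn : 0 < n) (hπ : IsNoncrossing π) (h : π ≠ ⊤) :
    kexp π ≠ ⊥ := by
  intro hK
  have hcard := card_kexp hn hπ
  rw [hK, Finpartition.card_bot, Finset.card_univ, Fintype.card_fin] at hcard
  exact h (eq_top_of_card_parts_one hn (by omega))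

lemma coeff_X_one : PowerSeries.coeff 1 (PowerSeries.X : PowerSeries R) = 1 := by
  simp

lemma coeff_X_ne {k : ℕ} (h : k ≠ 1) :
    PowerSeries.coeff k (PowerSeries.X : PowerSeries R) = 0 := by
  rw [PowerSeries.coeff_X, if_neg h]

lemma memG1_X : memG1 (PowerSeries.X : PowerSeries R) := by
  constructor
  · simp
  · rw [coeff_X_one]
    exact isUnit_one

lemma memG1_boxConv {f g : PowerSeries R} (hf : memG1 f) (hg : memG1 g) :
    memG1 (boxConv f g) := by
  constructor
  · exact constantCoeff_boxConv f g
  · rw [coeff_one_boxConv]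
    exact hf.2.mul hg.2

/-- the left identity law. -/
lemma boxConv_X_left {f : PowerSeries R} (hf : memG1 f) :
    boxConv PowerSeries.X f = f := by
  ext m
  rcases Nat.eq_zero_or_pos m with rfl | hm
  · rw [PowerSeries.coeff_zero_eq_constantCoeff, constantCoeff_boxConv, hf.1]
  rw [coeff_boxConv _ _ hm.ne']
  rw [Finset.sum_eq_single ⟨⊥, bot_NC⟩]
  · have h1 : ∀ V ∈ (⊥ : FP m).parts, PowerSeries.coeff #V (PowerSeries.X : PowerSeries R) = 1 := by
      intro V hV
      rw [Finpartition.mem_bot_iff] at hV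
      obtain ⟨a, _, rfl⟩ := hV
      rw [Finset.card_singleton, coeff_X_one]
    rw [show ((⟨⊥, bot_NC⟩ : NCPart m) : FP m) = ⊥ from rfl]
    rw [Finset.prod_congr rfl h1, Finset.prod_const_one, one_mul]
    rw [kexp_bot, parts_top hm, Finset.prod_singleton, Finset.card_univ, Fintype.card_fin]
  · intro π _ hπ
    have hne : π.1 ≠ ⊥ := fun h => hπ (Subtype.ext h)
    have : ∃ V ∈ π.1.parts, #V ≠ 1 := by
      by_contra hall
      push_neg at hall
      exact hne (eq_bot_of_parts_card_one hall)
    obtain ⟨V, hV, hVc⟩ := this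
    rw [Finset.prod_eq_zero hV (coeff_X_ne hVc), zero_mul]
  · intro h
    exact absurd (mem_univ _) h

/-- the right identity law. -/
lemma boxConv_X_right {f : PowerSeries R} (hf : memG1 f) :
    boxConv f PowerSeries.X = f := by
  ext m
  rcases Nat.eq_zero_or_pos m with rfl | hm
  · rw [PowerSeries.coeff_zero_eq_constantCoeff, constantCoeff_boxConv, hf.1]
  rw [coeff_boxConv _ _ hm.ne']
  rw [Finset.sum_eq_single ⟨⊤, top_NC⟩]
  · rw [show ((⟨⊤, top_NC⟩ : NCPart m) : FP m) = ⊤ from rfl]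
    rw [parts_top hm, Finset.prod_singleton, Finset.card_univ, Fintype.card_fin]
    rw [kexp_top]
    have h1 : ∀ V ∈ (⊥ : FP m).parts, PowerSeries.coeff #V (PowerSeries.X : PowerSeries R) = 1 := by
      intro V hV
      rw [Finpartition.mem_bot_iff] at hV
      obtain ⟨a, _, rfl⟩ := hV
      rw [Finset.card_singleton, coeff_X_one]
    rw [Finset.prod_congr rfl h1, Finset.prod_const_one, mul_one]
  · intro π _ hπ
    have hne : π.1 ≠ ⊤ := fun h => hπ (Subtype.ext h)
    have hKne : kexp π.1 ≠ ⊥ := kexp_ne_bot hm π.2 hne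
    have : ∃ V ∈ (kexp π.1).parts, #V ≠ 1 := by
      by_contra hall
      push_neg at hall
      exact hKne (eq_bot_of_parts_card_one hall)
    obtain ⟨V, hV, hVc⟩ := this
    rw [Finset.prod_eq_zero hV (coeff_X_ne hVc), mul_zero]
  · intro h
    exact absurd (mem_univ _) h

end BoxAux

namespace BoxAux

variable {n : ℕ}

lemma prod_parts_revP {M : Type*} [CommMonoid M] (π : FP n)
    (F : Finset (Fin n) → M) (hF : ∀ A, F (A.image Fin.rev) = F A) :
    ∏ A ∈ (revP π).parts, F A = ∏ A ∈ π.parts, F A := by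
  rw [parts_revP, Finset.prod_image ?inj]
  case inj =>
    intro A₁ _ A₂ _ h
    have h' : A₁.image Fin.rev = A₂.image Fin.rev := h
    rw [← image_rev_image_rev A₁, h', image_rev_image_rev]
  exact Finset.prod_congr rfl fun A _ => hF A

open Classical in
lemma graph_char {m : ℕ} (hm : 0 < m) (p : NCPart m × NCPart m) :
    p.2 = Kn p.1 ↔
      (KrewCompat p.1.1 p.2.1 ∧ #p.1.1.parts + #p.2.1.parts = m + 1) := by
  constructor
  · intro h
    rw [h]
    exact ⟨krewCompat_kexp p.1.2, card_Kn hm p.1⟩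
  · rintro ⟨hc, hcard⟩
    have hle : p.2 ≤ Kn p.1 := compat_iff_le_Kn.1 hc
    have hK := card_Kn hm p.1
    refine eq_of_le_of_card_le (hle : p.2.1 ≤ (Kn p.1).1) (le_of_eq ?_) |> Subtype.ext
    omega

open Classical in
lemma coeff_boxConv_pairs (f g : PowerSeries R) {m : ℕ} (hm : 0 < m) :
    PowerSeries.coeff m (boxConv f g) =
      ∑ p ∈ univ.filter (fun p : NCPart m × NCPart m =>
          KrewCompat p.1.1 p.2.1 ∧ #p.1.1.parts + #p.2.1.parts = m + 1),
        (∏ V ∈ p.1.1.parts, PowerSeries.coeff #V f) *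
          ∏ W ∈ p.2.1.parts, PowerSeries.coeff #W g := by
  rw [coeff_boxConv f g hm.ne']
  refine Finset.sum_nbij' (i := fun π => (π, Kn π)) (j := Prod.fst) ?_ ?_ ?_ ?_ ?_
  · intro π _
    rw [mem_filter]
    exact ⟨mem_univ _, (graph_char hm (π, Kn π)).1 rfl⟩
  · intro p _
    exact mem_univ _
  · intro π _
    rfl
  · intro p hp
    rw [mem_filter] at hp
    have := (graph_char hm p).2 hp.2
    exact Prod.ext rfl this.symm
  · intro π _
    rfl

open Classical in
lemma boxConv_comm (f g : PowerSeries R) : boxConv f g = boxConv g f := by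
  ext m
  rcases Nat.eq_zero_or_pos m with rfl | hm
  · rw [PowerSeries.coeff_zero_eq_constantCoeff, constantCoeff_boxConv,
      constantCoeff_boxConv]
  rw [coeff_boxConv_pairs f g hm, coeff_boxConv_pairs g f hm]
  refine Finset.sum_nbij' (i := fun p => (Tn p.2, Tn p.1)) (j := fun p => (Tn p.2, Tn p.1))
    ?_ ?_ ?_ ?_ ?_
  · intro p hp
    rw [mem_filter] at hp ⊢
    obtain ⟨-, hc, hcard⟩ := hp
    refine ⟨mem_univ _, krewCompat_rev hc, ?_⟩
    rw [card_Tn, card_Tn]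
    omega
  · intro p hp
    rw [mem_filter] at hp ⊢
    obtain ⟨-, hc, hcard⟩ := hp
    refine ⟨mem_univ _, krewCompat_rev hc, ?_⟩
    rw [card_Tn, card_Tn]
    omega
  · intro p _
    exact Prod.ext (Tn_Tn p.1) (Tn_Tn p.2)
  · intro p _
    exact Prod.ext (Tn_Tn p.1) (Tn_Tn p.2)
  · intro p _
    show _ = (∏ V ∈ (revP p.2.1).parts, PowerSeries.coeff #V g) *
      ∏ W ∈ (revP p.1.1).parts, PowerSeries.coeff #W f
    have e1 : ∏ V ∈ (revP p.2.1).parts, PowerSeries.coeff #V g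
        = ∏ V ∈ p.2.1.parts, PowerSeries.coeff #V g :=
      prod_parts_revP _ _ (fun A => by
        rw [Finset.card_image_of_injective _ Fin.rev_injective])
    have e2 : ∏ W ∈ (revP p.1.1).parts, PowerSeries.coeff #W f
        = ∏ W ∈ p.1.1.parts, PowerSeries.coeff #W f :=
      prod_parts_revP _ _ (fun A => by
        rw [Finset.card_image_of_injective _ Fin.rev_injective])
    rw [e1, e2, mul_comm]

end BoxAux

namespace BoxAux

open Classical in
/-- coefficients of the right boxed-convolution inverse of `f`, where `w` is the
inverse of the linear coefficient of `f`. -/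
noncomputable def invC (f : PowerSeries R) (w : R) : ℕ → R
  | 0 => 0
  | 1 => w
  | (m+2) => -(w ^ (m + 2)) *
      ∑ π ∈ (univ.filter fun π : NCPart (m+2) => π.1 ≠ ⊥).attach,
        (∏ V ∈ π.1.1.parts, PowerSeries.coeff #V f) *
          ∏ W ∈ (kexp π.1.1).parts.attach, invC f w #W.1
  termination_by m => m
  decreasing_by
  · have hW := W.2
    have hπ := π.2
    rw [mem_filter] at hπ
    have hcard : #W.1 ≤ m + 2 := by
      have := Finset.card_le_univ W.1
      rwa [Fintype.card_fin] at this
    rcases lt_or_eq_of_le hcard with h | h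
    · omega
    · exfalso
      have hWuniv : W.1 = univ :=
        Finset.eq_univ_of_card W.1 (by rw [h, Fintype.card_fin])
      rw [hWuniv] at hW
      have htop : kexp π.1.1 = ⊤ := eq_top_of_univ_mem hW
      have hbot : π.1.1 = ⊥ :=
        kexp_inj (Nat.succ_pos _) π.1.2 bot_NC (htop.trans kexp_bot.symm)
      exact hπ.2 hbot

open Classical in
lemma boxConv_inv_exists {f : PowerSeries R} (hf : memG1 f) :
    ∃ g, memG1 g ∧ boxConv f g = PowerSeries.X ∧ boxConv g f = PowerSeries.X := by
  obtain ⟨u, hu⟩ := hf.2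
  set w : R := ((u⁻¹ : Rˣ) : R) with hw
  set g := PowerSeries.mk (invC f w) with hgdef
  have hcoeffg : ∀ k, PowerSeries.coeff k g = invC f w k := fun k =>
    PowerSeries.coeff_mk k _
  have hg1 : PowerSeries.coeff 1 g = w := by
    rw [hcoeffg 1]
    simp [invC]
  have hg0 : PowerSeries.constantCoeff g = 0 := by
    rw [← PowerSeries.coeff_zero_eq_constantCoeff, hcoeffg 0]
    simp [invC]
  have hmemg : memG1 g := ⟨hg0, by rw [hg1]; exact ⟨u⁻¹, rfl⟩⟩
  have hmain : boxConv f g = PowerSeries.X := by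
    ext m
    match m with
    | 0 =>
      rw [PowerSeries.coeff_zero_eq_constantCoeff, constantCoeff_boxConv]
      simp
    | 1 =>
      rw [coeff_one_boxConv, coeff_X_one, hg1, ← hu]
      exact u.mul_inv
    | (m+2) =>
      rw [coeff_X_ne (by omega), coeff_boxConv _ _ (by omega)]
      rw [← Finset.sum_filter_add_sum_filter_not univ (fun π : NCPart (m+2) => π.1 ≠ ⊥)]
      -- the ⊥ part
      have hbotset : (univ.filter fun π : NCPart (m+2) => ¬π.1 ≠ ⊥) = {⟨⊥, bot_NC⟩} := by
        ext π
        simp only [mem_filter, mem_univ, true_and, not_not, Finset.mem_singleton]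
        constructor
        · intro h
          exact Subtype.ext h
        · rintro rfl
          rfl
      rw [hbotset, Finset.sum_singleton]
      -- compute the ⊥ term
      have hbotprod : (∏ V ∈ ((⟨⊥, bot_NC⟩ : NCPart (m+2)) : FP (m+2)).parts,
          PowerSeries.coeff #V f) = (PowerSeries.coeff 1 f) ^ (m + 2) := by
        rw [show ((⟨⊥, bot_NC⟩ : NCPart (m+2)) : FP (m+2)) = ⊥ from rfl]
        have : ∀ V ∈ (⊥ : FP (m+2)).parts,
            PowerSeries.coeff #V f = PowerSeries.coeff 1 f := by
          intro V hV
          rw [Finpartition.mem_bot_iff] at hV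
          obtain ⟨a, _, rfl⟩ := hV
          rw [Finset.card_singleton]
        rw [Finset.prod_congr rfl this, Finset.prod_const, Finpartition.card_bot,
          Finset.card_univ, Fintype.card_fin]
      have hbotk : (∏ W ∈ (kexp ((⟨⊥, bot_NC⟩ : NCPart (m+2)) : FP (m+2))).parts,
          PowerSeries.coeff #W g) = invC f w (m + 2) := by
        rw [show ((⟨⊥, bot_NC⟩ : NCPart (m+2)) : FP (m+2)) = ⊥ from rfl]
        rw [kexp_bot, parts_top (Nat.succ_pos _), Finset.prod_singleton,
          Finset.card_univ, Fintype.card_fin, hcoeffg]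
      rw [hbotprod, hbotk]
      -- unfold the recursion
      have hrec : invC f w (m + 2) = -(w ^ (m + 2)) *
          ∑ π ∈ (univ.filter fun π : NCPart (m+2) => π.1 ≠ ⊥),
            (∏ V ∈ π.1.parts, PowerSeries.coeff #V f) *
              ∏ W ∈ (kexp π.1).parts, PowerSeries.coeff #W g := by
        rw [invC]
        congr 1
        rw [← Finset.sum_attach (univ.filter fun π : NCPart (m+2) => π.1 ≠ ⊥)
          (fun π => (∏ V ∈ π.1.parts, PowerSeries.coeff #V f) *
            ∏ W ∈ (kexp π.1).parts, PowerSeries.coeff #W g)]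
        refine Finset.sum_congr rfl fun π _ => ?_
        congr 1
        rw [← Finset.prod_attach ((kexp π.1.1).parts)
          (fun W => PowerSeries.coeff #W g)]
        refine Finset.prod_congr rfl fun W _ => ?_
        rw [hcoeffg]
      rw [hrec]
      have hcw : (PowerSeries.coeff 1 f) ^ (m + 2) * w ^ (m + 2) = 1 := by
        rw [← mul_pow, ← hu]
        rw [show ((u : R) * w) = 1 from u.mul_inv]
        rw [one_pow]
      set S := ∑ π ∈ (univ.filter fun π : NCPart (m+2) => π.1 ≠ ⊥),
        (∏ V ∈ π.1.parts, PowerSeries.coeff #V f) *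
          ∏ W ∈ (kexp π.1).parts, PowerSeries.coeff #W g with hS
      have : (PowerSeries.coeff 1 f) ^ (m + 2) * (-(w ^ (m + 2)) * S) = -S := by
        calc (PowerSeries.coeff 1 f) ^ (m + 2) * (-(w ^ (m + 2)) * S)
            = -(((PowerSeries.coeff 1 f) ^ (m + 2) * w ^ (m + 2)) * S) := by ring
          _ = -S := by rw [hcw, one_mul]
      rw [this, add_neg_cancel]
  exact ⟨g, hmemg, hmain, by rw [boxConv_comm]; exact hmain⟩

end BoxAux

namespace BoxAux

open Classical in
lemma sum_filter_prod {α β : Type*} [Fintype α] [Fintype β]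
    (Q : α → β → Prop) (F : α × β → R) :
    ∑ p ∈ univ.filter (fun p : α × β => Q p.1 p.2), F p
      = ∑ a : α, ∑ b ∈ univ.filter (fun b => Q a b), F (a, b) := by
  rw [Finset.sum_filter, Fintype.sum_prod_type]
  refine Finset.sum_congr rfl fun a _ => ?_
  rw [Finset.sum_filter]

open Classical in
lemma boxConv_assoc (f g h : PowerSeries R) :
    boxConv (boxConv f g) h = boxConv f (boxConv g h) := by
  ext m
  rcases Nat.eq_zero_or_pos m with rfl | hm
  · rw [PowerSeries.coeff_zero_eq_constantCoeff, constantCoeff_boxConv,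
      constantCoeff_boxConv]
  rw [coeff_boxConv _ _ hm.ne', coeff_boxConv _ _ hm.ne']
  have hL : ∀ π : NCPart m,
      (∏ V ∈ π.1.parts, PowerSeries.coeff #V (boxConv f g))
      = ∑ σ ∈ univ.filter (fun σ : NCPart m => σ.1 ≤ π.1),
          (∏ A ∈ σ.1.parts, PowerSeries.coeff #A f) *
            ∏ A ∈ (π.1 ⊓ kexp σ.1).parts, PowerSeries.coeff #A g := by
    intro π
    have hco : ∀ V ∈ π.1.parts, PowerSeries.coeff #V (boxConv f g)
        = ∑ s : NCPart #V, (∏ A ∈ s.1.parts, PowerSeries.coeff #A f) *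
            ∏ A ∈ (kexp s.1).parts, PowerSeries.coeff #A g := fun V hV =>
      coeff_boxConv f g (Finset.card_pos.2 (π.1.nonempty_of_mem_parts hV)).ne'
    rw [Finset.prod_congr rfl hco]
    exact key_expand π (fun k => PowerSeries.coeff k f) (fun k => PowerSeries.coeff k g)
  have hR : ∀ σ : NCPart m,
      (∏ W ∈ (kexp σ.1).parts, PowerSeries.coeff #W (boxConv g h))
      = ∑ τ ∈ univ.filter (fun τ : NCPart m => τ.1 ≤ (Kn σ).1),
          (∏ A ∈ τ.1.parts, PowerSeries.coeff #A g) *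
            ∏ A ∈ ((Kn σ).1 ⊓ kexp τ.1).parts, PowerSeries.coeff #A h := by
    intro σ
    have hco : ∀ W ∈ (Kn σ).1.parts, PowerSeries.coeff #W (boxConv g h)
        = ∑ s : NCPart #W, (∏ A ∈ s.1.parts, PowerSeries.coeff #A g) *
            ∏ A ∈ (kexp s.1).parts, PowerSeries.coeff #A h := fun W hW =>
      coeff_boxConv g h (Finset.card_pos.2 ((Kn σ).1.nonempty_of_mem_parts hW)).ne'
    have : (∏ W ∈ (kexp σ.1).parts, PowerSeries.coeff #W (boxConv g h))
        = ∏ W ∈ (Kn σ).1.parts, PowerSeries.coeff #W (boxConv g h) := rfl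
    rw [this, Finset.prod_congr rfl hco]
    exact key_expand (Kn σ) (fun k => PowerSeries.coeff k g)
      (fun k => PowerSeries.coeff k h)
  calc ∑ π : NCPart m, (∏ V ∈ π.1.parts, PowerSeries.coeff #V (boxConv f g)) *
        ∏ W ∈ (kexp π.1).parts, PowerSeries.coeff #W h
      = ∑ π : NCPart m, ∑ σ ∈ univ.filter (fun σ : NCPart m => σ.1 ≤ π.1),
          ((∏ A ∈ σ.1.parts, PowerSeries.coeff #A f) *
            ∏ A ∈ (π.1 ⊓ kexp σ.1).parts, PowerSeries.coeff #A g) *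
          ∏ W ∈ (kexp π.1).parts, PowerSeries.coeff #W h := by
        refine Finset.sum_congr rfl fun π _ => ?_
        rw [hL π, Finset.sum_mul]
    _ = ∑ p ∈ univ.filter (fun p : NCPart m × NCPart m => p.2.1 ≤ p.1.1),
          ((∏ A ∈ p.2.1.parts, PowerSeries.coeff #A f) *
            ∏ A ∈ (p.1.1 ⊓ kexp p.2.1).parts, PowerSeries.coeff #A g) *
          ∏ W ∈ (kexp p.1.1).parts, PowerSeries.coeff #W h := by
        exact (sum_filter_prod (fun π σ : NCPart m => σ.1 ≤ π.1)
          (fun p => ((∏ A ∈ p.2.1.parts, PowerSeries.coeff #A f) *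
            ∏ A ∈ (p.1.1 ⊓ kexp p.2.1).parts, PowerSeries.coeff #A g) *
          ∏ W ∈ (kexp p.1.1).parts, PowerSeries.coeff #W h)).symm
    _ = ∑ q ∈ univ.filter (fun q : NCPart m × NCPart m => q.2.1 ≤ (Kn q.1).1),
          ((∏ A ∈ q.1.1.parts, PowerSeries.coeff #A f) *
            ∏ A ∈ q.2.1.parts, PowerSeries.coeff #A g) *
          ∏ W ∈ ((Kn q.1).1 ⊓ kexp q.2.1).parts, PowerSeries.coeff #W h := by
        refine Finset.sum_nbij' (i := fun p => (p.2, fwdI p.2 p.1))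
          (j := fun q => (bwdI q.1 q.2, q.1)) ?_ ?_ ?_ ?_ ?_
        · intro p hp
          rw [mem_filter]
          exact ⟨mem_univ _, fwdI_le p.2 p.1⟩
        · intro q hq
          rw [mem_filter] at hq ⊢
          exact ⟨mem_univ _, le_bwdI hm q.1 q.2 hq.2⟩
        · intro p hp
          rw [mem_filter] at hp
          have := bwdI_fwdI hm p.2 p.1 hp.2
          exact Prod.ext this rfl
        · intro q hq
          rw [mem_filter] at hq
          exact Prod.ext rfl (fwdI_bwdI hm q.1 q.2 hq.2)
        · intro p hp
          rw [mem_filter] at hp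
          have hmeet : kexp p.1.1 = (Kn p.2).1 ⊓ kexp (fwdI p.2 p.1).1 :=
            congrArg Subtype.val (kexp_of_meet' p.2 p.1 hp.2)
          rw [hmeet]
          rfl
    _ = ∑ σ : NCPart m, ∑ τ ∈ univ.filter (fun τ : NCPart m => τ.1 ≤ (Kn σ).1),
          ((∏ A ∈ σ.1.parts, PowerSeries.coeff #A f) *
            ∏ A ∈ τ.1.parts, PowerSeries.coeff #A g) *
          ∏ W ∈ ((Kn σ).1 ⊓ kexp τ.1).parts, PowerSeries.coeff #W h := by
        exact sum_filter_prod (fun σ τ : NCPart m => τ.1 ≤ (Kn σ).1)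
          (fun q => ((∏ A ∈ q.1.1.parts, PowerSeries.coeff #A f) *
            ∏ A ∈ q.2.1.parts, PowerSeries.coeff #A g) *
          ∏ W ∈ ((Kn q.1).1 ⊓ kexp q.2.1).parts, PowerSeries.coeff #W h)
    _ = ∑ σ : NCPart m, (∏ V ∈ σ.1.parts, PowerSeries.coeff #V f) *
          ∏ W ∈ (kexp σ.1).parts, PowerSeries.coeff #W (boxConv g h) := by
        refine Finset.sum_congr rfl fun σ _ => ?_
        rw [hR σ, Finset.mul_sum]
        refine Finset.sum_congr rfl fun τ _ => ?_
        ring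

end BoxAux


/-- `𝔊¹(R)`, the series `∑_{n≥1} rₙ zⁿ` with `r₁ ∈ R^×`, is a group under boxed
convolution with identity `z`, and for `s = 1` this group is abelian. -/
theorem G1_abelian_group_under_boxConv :
    (∀ f g : PowerSeries R, memG1 f → memG1 g → memG1 (boxConv f g)) ∧
    (∀ f g h : PowerSeries R, memG1 f → memG1 g → memG1 h →
      boxConv (boxConv f g) h = boxConv f (boxConv g h)) ∧
    memG1 (PowerSeries.X : PowerSeries R) ∧
    (∀ f : PowerSeries R, memG1 f →
      boxConv PowerSeries.X f = f ∧ boxConv f PowerSeries.X = f) ∧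
    (∀ f : PowerSeries R, memG1 f → ∃ g : PowerSeries R, memG1 g ∧
      boxConv f g = PowerSeries.X ∧ boxConv g f = PowerSeries.X) ∧
    (∀ f g : PowerSeries R, memG1 f → memG1 g → boxConv f g = boxConv g f) := by
  refine ⟨fun f g hf hg => BoxAux.memG1_boxConv hf hg,
    fun f g h _ _ _ => BoxAux.boxConv_assoc f g h,
    BoxAux.memG1_X,
    fun f hf => ⟨BoxAux.boxConv_X_left hf, BoxAux.boxConv_X_right hf⟩,
    fun f hf => BoxAux.boxConv_inv_exists hf,
    fun f g _ _ => BoxAux.boxConv_comm f g⟩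
end

section
/- Let (𝒜, φ) be a non-commutative k-probability space (φ: 𝒜 → k, k a field, φ(1)=1). If unital subalgebras 𝒜₁, …, 𝒜ₙ ⊆ 𝒜 have vanishing mixed free cumulants (are combinatorially free), then they are classically free: φ(a₁···aₘ) = 0 whenever aⱼ ∈ 𝒜_{iⱼ}, consecutive indices differ (i₁ ≠ i₂, …, i_{m−1} ≠ iₘ), and φ(aⱼ) = 0 for all j. -/
open Finset

/-- The sublist of `l` at a set of positions `V`, in increasing order. -/
def lres {A : Type*} (l : List A) (V : Finset (Fin l.length)) : List A :=
  (V.sort (· ≤ ·)).map l.get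


lemma exists_interval_part {m : ℕ} (π : Finpartition (univ : Finset (Fin m)))
    (hπ : IsNoncrossing π) (hm : 0 < m) :
    ∃ V ∈ π.parts, ∀ x z : Fin m, x ∈ V → z ∈ V → ∀ y : Fin m, x ≤ y → y ≤ z → y ∈ V := by
  obtain ⟨W, hW, -⟩ := π.exists_mem (mem_univ (⟨0, hm⟩ : Fin m))
  obtain ⟨V, hV, hmin⟩ := Finset.exists_min_image π.parts
    (fun V => V.sup (fun a => (a : ℕ)) + V.sup (fun a => m - (a : ℕ))) ⟨W, hW⟩
  refine ⟨V, hV, ?_⟩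
  intro x z hx hz y hxy hyz
  by_contra hy
  have hx_y : x < y := hxy.lt_of_ne (fun h => hy (h ▸ hx))
  have hy_z : y < z := hyz.lt_of_ne (fun h => hy (h ▸ hz))
  obtain ⟨B, hB, hyB⟩ := π.exists_mem (mem_univ y)
  have hBV : B ≠ V := fun h => hy (h ▸ hyB)
  have hkey : ∀ e ∈ B, x < e ∧ e < z := by
    intro e he
    constructor
    · rcases lt_trichotomy x e with h | h | h
      · exact h
      · exact absurd (π.eq_of_mem_parts hB hV (h ▸ he) hx) hBV
      · exact absurd ⟨e, x, y, z, B, V, h, hx_y, hy_z, hB, hV, hBV, he, hyB, hx, hz⟩ hπ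
    · rcases lt_trichotomy e z with h | h | h
      · exact h
      · exact absurd (π.eq_of_mem_parts hB hV (h ▸ he) hz) hBV
      · exact absurd ⟨x, y, z, e, V, B, hx_y, hy_z, h, hV, hB, hBV.symm, hx, hz, hyB, he⟩ hπ
  have hB1 : B.sup (fun a => (a : ℕ)) ≤ (z : ℕ) - 1 :=
    Finset.sup_le fun e he => by have : (e : ℕ) < (z : ℕ) := (hkey e he).2; omega
  have hB2 : B.sup (fun a => m - (a : ℕ)) ≤ m - ((x : ℕ) + 1) :=
    Finset.sup_le fun e he => by have : (x : ℕ) < (e : ℕ) := (hkey e he).1; omega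
  have hV1 : (z : ℕ) ≤ V.sup (fun a => (a : ℕ)) := Finset.le_sup hz
  have hV2 : m - (x : ℕ) ≤ V.sup (fun a => m - (a : ℕ)) :=
    Finset.le_sup (f := fun a : Fin m => m - (a : ℕ)) hx
  have hle := hmin B hB
  have hzm : (z : ℕ) < m := z.isLt
  have h1 : (x : ℕ) < (y : ℕ) := hx_y
  have h2 : (y : ℕ) < (z : ℕ) := hy_z
  omega

lemma parts_fin_one (π : Finpartition (univ : Finset (Fin 1))) : π.parts = {univ} := by
  have h1 : ∀ V ∈ π.parts, V = univ := by
    intro V hV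
    have hne := π.nonempty_of_mem_parts hV
    have hsub : V ⊆ univ := π.le hV
    rw [Finset.univ_unique] at hsub ⊢
    rcases Finset.subset_singleton_iff.1 hsub with h | h
    · exact absurd h hne.ne_empty
    · exact h
  obtain ⟨W, hW, -⟩ := π.exists_mem (mem_univ (0 : Fin 1))
  exact Finset.eq_singleton_iff_unique_mem.2 ⟨h1 W hW ▸ hW, h1⟩

noncomputable instance : Unique (NCPart 1) where
  default := ⟨Finpartition.indiscrete (by simp [Finset.univ_unique] : (univ : Finset (Fin 1)) ≠ ⊥),
    by rintro ⟨a, b, c, d, B₁, B₂, hab, hbc, -⟩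
       have : (a : ℕ) < 1 := a.isLt
       have : (c : ℕ) < 1 := c.isLt
       have h1 : (a : ℕ) < (b : ℕ) := hab
       have h2 : (b : ℕ) < (c : ℕ) := hbc
       omega⟩
  uniq π := Subtype.ext (Finpartition.ext (by
    rw [parts_fin_one π.1, parts_fin_one]))

/-- Combinatorially free subalgebras are classically free.  Let `(𝒜, φ)` be a
non-commutative `k`-probability space (`φ` `k`-linear, `φ(1) = 1`, `k` a field), and let
`κ` be the free cumulant functionals, i.e. `φ(a₁⋯aₙ) = ∑_{π ∈ NC(n)} ∏_{V ∈ π} κ(a|_V)`.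
If the subalgebras `𝒜_i` have vanishing mixed cumulants, then `φ(a₁⋯aₘ) = 0` whenever
`aⱼ ∈ 𝒜_{iⱼ}` with consecutive indices distinct and `φ(aⱼ) = 0` for all `j`. -/
theorem combinatorially_free_implies_classically_free
    {k : Type*} [Field k] {A : Type*} [Ring A] [Algebra k A]
    (φ : A →ₗ[k] k) (hφ : φ 1 = 1)
    {ι : Type*} (𝒜 : ι → Subalgebra k A)
    (κ : List A → k)
    (hmc : ∀ l : List A,
      φ l.prod = ∑ᶠ π : NCPart l.length, ∏ V ∈ π.1.parts, κ (lres l V))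
    (hmixed : ∀ (l : List A) (idx : Fin l.length → ι),
      (∀ j : Fin l.length, l.get j ∈ 𝒜 (idx j)) →
      (∃ j j' : Fin l.length, idx j ≠ idx j') → κ l = 0) :
    ∀ (l : List A) (idx : Fin l.length → ι), l ≠ [] →
      (∀ j : Fin l.length, l.get j ∈ 𝒜 (idx j)) →
      (∀ (j : Fin l.length) (h : (j : ℕ) + 1 < l.length), idx j ≠ idx ⟨(j : ℕ) + 1, h⟩) →
      (∀ j : Fin l.length, φ (l.get j) = 0) →
      φ l.prod = 0 := by
  intro l idx hne hmem halt hphi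
  have hκ1 : ∀ a : A, κ [a] = φ a := by
    intro a
    have h := hmc [a]
    haveI : Unique (NCPart ([a] : List A).length) := inferInstanceAs (Unique (NCPart 1))
    rw [finsum_unique] at h
    have hd : (default : NCPart 1).1.parts = {univ} := parts_fin_one _
    rw [hd, Finset.prod_singleton] at h
    have hu : lres [a] (univ : Finset (Fin 1)) = [a] := by
      rw [show (univ : Finset (Fin 1)) = {0} from Finset.univ_unique,
        lres, Finset.sort_singleton]
      rfl
    rw [hu] at h
    simpa using h.symm
  have hm : 0 < l.length := List.length_pos_iff.2 hne
  rw [hmc l]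
  apply finsum_eq_zero_of_forall_eq_zero
  intro π
  obtain ⟨V, hV, hint⟩ := exists_interval_part π.1 π.2 hm
  apply Finset.prod_eq_zero hV
  have hVne := π.1.nonempty_of_mem_parts hV
  rcases eq_or_lt_of_le (Finset.one_le_card.2 hVne) with hc | hc
  · obtain ⟨j, hj⟩ := Finset.card_eq_one.1 hc.symm
    have : lres l V = [l.get j] := by
      rw [hj, lres, Finset.sort_singleton]; rfl
    rw [this, hκ1, hphi j]
  · set s := V.sort (· ≤ ·) with hs
    have hlen : (lres l V).length = s.length := by rw [lres, List.length_map]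
    set x := V.min' hVne with hxdef
    set z := V.max' hVne with hzdef
    have hxz : (x : ℕ) < (z : ℕ) := V.min'_lt_max'_of_card hc
    have hyl : ((x : ℕ) + 1) < l.length := by have := z.isLt; omega
    set y : Fin l.length := ⟨(x : ℕ) + 1, hyl⟩ with hydef
    have hyV : y ∈ V := hint x z (V.min'_mem hVne) (V.max'_mem hVne) y
      (by simp [Fin.le_def, hydef]) (by simp [Fin.le_def, hydef]; omega)
    obtain ⟨px, hpx⟩ := List.mem_iff_get.1 ((Finset.mem_sort (α := Fin l.length) (· ≤ ·)).2 (V.min'_mem hVne))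
    obtain ⟨py, hpy⟩ := List.mem_iff_get.1 ((Finset.mem_sort (α := Fin l.length) (· ≤ ·)).2 hyV)
    refine hmixed (lres l V) (fun p => idx (s.get (Fin.cast hlen p))) ?_ ?_
    · intro p
      have hp : (lres l V).get p = l.get (s.get (Fin.cast hlen p)) := by
        simp only [lres, List.get_eq_getElem, List.getElem_map, hs]
        exact List.getElem_map ..
      rw [hp]
      exact hmem _
    · refine ⟨Fin.cast hlen.symm px, Fin.cast hlen.symm py, ?_⟩
      have e1 : Fin.cast hlen (Fin.cast hlen.symm px) = px := rfl
      have e2 : Fin.cast hlen (Fin.cast hlen.symm py) = py := rfl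
      simp only [e1, e2, hpx, hpy]
      rw [show s.get px = x from hpx, show s.get py = y from hpy]
      exact halt x hyl
end
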